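/- arXiv:2106.02060 — 8 statements merged into one kernel-verified Lean document; each statement's English description precedes it below -/
import Mathlib

section
/- Let h : [0,1] × ℝ → ℝ be continuous and let U : [0,1] → ℝ be continuously differentiable on [0,1] and twice differentiable on (0,1). Assume that U''(x) + h(x, U(x)) ≥ 0 for all x ∈ (0,1), that U'(0) ≥ 0 and U'(1) ≤ 0 (i.e. the outward normal derivative of U is ≤ 0 at both endpoints). If x₀ ∈ [0,1] is a point where U attains its maximum over [0,1], then h(x₀, U(x₀)) ≥ 0. -/
open Set

/-- One-dimensional elliptic maximum principle (Lemma 2.1(i)):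
if `U'' + h(x, U) ≥ 0` on `(0,1)`, `U'(0) ≥ 0`, `U'(1) ≤ 0`, and `U` attains its
maximum over `[0,1]` at `x₀`, then `h(x₀, U(x₀)) ≥ 0`. -/
theorem stmt_0 (h : ℝ → ℝ → ℝ) (U U' U'' : ℝ → ℝ)
    (hcont : ContinuousOn (fun p : ℝ × ℝ => h p.1 p.2) (Icc 0 1 ×ˢ univ))
    (hU : ∀ x ∈ Icc (0:ℝ) 1, HasDerivWithinAt U (U' x) (Icc 0 1) x)
    (hU'cont : ContinuousOn U' (Icc 0 1))
    (hU'' : ∀ x ∈ Ioo (0:ℝ) 1, HasDerivAt U' (U'' x) x)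
    (hineq : ∀ x ∈ Ioo (0:ℝ) 1, 0 ≤ U'' x + h x (U x))
    (h0 : 0 ≤ U' 0) (h1 : U' 1 ≤ 0)
    (x₀ : ℝ) (hx₀ : x₀ ∈ Icc (0:ℝ) 1)
    (hmax : ∀ x ∈ Icc (0:ℝ) 1, U x ≤ U x₀) :
    0 ≤ h x₀ (U x₀) := by
  by_contra hneg
  push_neg at hneg
  have hUcont : ContinuousOn U (Icc 0 1) := fun x hx => (hU x hx).continuousWithinAt
  set g : ℝ → ℝ := fun x => h x (U x) with hg_def
  have hgcont : ContinuousOn g (Icc 0 1) :=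
    hcont.comp (continuousOn_id.prodMk hUcont) (fun x hx => ⟨hx, mem_univ _⟩ : MapsTo (fun x => (id x, U x)) (Icc 0 1) (Icc 0 1 ×ˢ univ))
  -- eventually g < 0 near x₀ within Icc 0 1
  have hev : ∀ᶠ x in nhdsWithin x₀ (Icc 0 1), g x < 0 :=
    (hgcont x₀ hx₀).eventually (eventually_lt_nhds hneg)
  rw [Filter.Eventually, Metric.mem_nhdsWithin_iff] at hev
  obtain ⟨δ, hδ, hball'⟩ := hev
  have hball : ∀ t : ℝ, dist t x₀ < δ → t ∈ Icc (0:ℝ) 1 → g t < 0 := fun t h1 h2 =>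
    hball' ⟨Metric.mem_ball.2 h1, h2⟩
  -- key: on any subinterval where g < 0, U'' > 0
  have hU''pos : ∀ x ∈ Ioo (0:ℝ) 1, g x < 0 → 0 < U'' x := by
    intro x hx hgx
    have := hineq x hx
    simp only [hg_def] at hgx
    linarith
  rcases lt_or_eq_of_le hx₀.2 with hlt1 | heq1
  · -- case x₀ < 1
    set b := min (x₀ + δ / 2) 1 with hb_def
    have hx₀b : x₀ < b := lt_min (by linarith) hlt1
    have hb1 : b ≤ 1 := min_le_right _ _
    have hsub : Icc x₀ b ⊆ Icc 0 1 := fun t ht => ⟨le_trans hx₀.1 ht.1, le_trans ht.2 hb1⟩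
    have hballmem : ∀ t ∈ Icc x₀ b, dist t x₀ < δ := by
      intro t ht
      rw [Real.dist_eq, abs_lt]
      constructor
      · linarith [ht.1]
      · have : t ≤ x₀ + δ / 2 := le_trans ht.2 (min_le_left _ _)
        linarith
    have hIooSub : Ioo x₀ b ⊆ Ioo (0:ℝ) 1 := fun t ht =>
      ⟨lt_of_le_of_lt hx₀.1 ht.1, lt_of_lt_of_le ht.2 hb1⟩
    -- U' strictly monotone on [x₀, b]
    have hmonoU' : StrictMonoOn U' (Icc x₀ b) := by
      apply strictMonoOn_of_deriv_pos (convex_Icc _ _) (hU'cont.mono hsub)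
      intro x hx
      rw [interior_Icc] at hx
      have hx01 : x ∈ Ioo (0:ℝ) 1 := hIooSub hx
      rw [(hU'' x hx01).deriv]
      exact hU''pos x hx01 (hball x (hballmem x ⟨le_of_lt hx.1, le_of_lt hx.2⟩) (hsub ⟨le_of_lt hx.1, le_of_lt hx.2⟩))
    -- U' x₀ ≥ 0
    have hU'x₀ : 0 ≤ U' x₀ := by
      rcases eq_or_lt_of_le hx₀.1 with h00 | h00
      · rw [← h00]; exact h0
      · -- interior local max
        have hmem : Icc (0:ℝ) 1 ∈ nhds x₀ := Icc_mem_nhds h00 hlt1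
        have hda : HasDerivAt U (U' x₀) x₀ := (hU x₀ hx₀).hasDerivAt hmem
        have hlm : IsLocalMax U x₀ := Filter.eventually_of_mem hmem hmax
        rw [hlm.hasDerivAt_eq_zero hda]
    -- U strictly monotone on [x₀, b]
    have hmonoU : StrictMonoOn U (Icc x₀ b) := by
      apply strictMonoOn_of_deriv_pos (convex_Icc _ _) (hUcont.mono hsub)
      intro x hx
      rw [interior_Icc] at hx
      have hx01 : x ∈ Ioo (0:ℝ) 1 := hIooSub hx
      have hmem : Icc (0:ℝ) 1 ∈ nhds x := Icc_mem_nhds hx01.1 hx01.2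
      have hda : HasDerivAt U (U' x) x := (hU x (Ioo_subset_Icc_self hx01)).hasDerivAt hmem
      rw [hda.deriv]
      calc 0 ≤ U' x₀ := hU'x₀
        _ < U' x := hmonoU' (left_mem_Icc.2 (le_of_lt hx₀b)) ⟨le_of_lt hx.1, le_of_lt hx.2⟩ hx.1
    have : U x₀ < U b := hmonoU (left_mem_Icc.2 (le_of_lt hx₀b)) (right_mem_Icc.2 (le_of_lt hx₀b)) hx₀b
    exact absurd (hmax b (hsub (right_mem_Icc.2 (le_of_lt hx₀b)))) (not_le.2 this)
  · -- case x₀ = 1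
    subst heq1
    set a := max (1 - δ / 2) 0 with ha_def
    have ha1 : a < 1 := max_lt (by linarith) one_pos
    have ha0 : 0 ≤ a := le_max_right _ _
    have hsub : Icc a 1 ⊆ Icc 0 1 := fun t ht => ⟨le_trans ha0 ht.1, ht.2⟩
    have hballmem : ∀ t ∈ Icc a 1, dist t 1 < δ := by
      intro t ht
      rw [Real.dist_eq, abs_lt]
      constructor
      · have : 1 - δ / 2 ≤ t := le_trans (le_max_left _ _) ht.1
        linarith
      · linarith [ht.2]
    have hIooSub : Ioo a 1 ⊆ Ioo (0:ℝ) 1 := fun t ht =>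
      ⟨lt_of_le_of_lt ha0 ht.1, ht.2⟩
    have hmonoU' : StrictMonoOn U' (Icc a 1) := by
      apply strictMonoOn_of_deriv_pos (convex_Icc _ _) (hU'cont.mono hsub)
      intro x hx
      rw [interior_Icc] at hx
      have hx01 : x ∈ Ioo (0:ℝ) 1 := hIooSub hx
      rw [(hU'' x hx01).deriv]
      exact hU''pos x hx01 (hball x (hballmem x ⟨le_of_lt hx.1, le_of_lt hx.2⟩) (hsub ⟨le_of_lt hx.1, le_of_lt hx.2⟩))
    have hantiU2 : StrictAntiOn U (Icc a 1) := by
      apply strictAntiOn_of_deriv_neg (convex_Icc _ _) (hUcont.mono hsub)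
      intro x hx
      rw [interior_Icc] at hx
      have hx01 : x ∈ Ioo (0:ℝ) 1 := hIooSub hx
      have hmem : Icc (0:ℝ) 1 ∈ nhds x := Icc_mem_nhds hx01.1 hx01.2
      have hda : HasDerivAt U (U' x) x := (hU x (Ioo_subset_Icc_self hx01)).hasDerivAt hmem
      rw [hda.deriv]
      calc U' x < U' 1 := hmonoU' ⟨le_of_lt hx.1, le_of_lt hx.2⟩ (right_mem_Icc.2 (le_of_lt ha1)) hx.2
        _ ≤ 0 := h1
    have : U 1 < U a := hantiU2 (left_mem_Icc.2 (le_of_lt ha1)) (right_mem_Icc.2 (le_of_lt ha1)) ha1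
    exact absurd (hmax a (hsub (left_mem_Icc.2 (le_of_lt ha1)))) (not_le.2 this)
end

section
/- Let h : [0,1] × ℝ → ℝ be continuous and let U : [0,1] → ℝ be continuously differentiable on [0,1] and twice differentiable on (0,1). Assume that U''(x) + h(x, U(x)) ≤ 0 for all x ∈ (0,1), that U'(0) ≤ 0 and U'(1) ≥ 0 (i.e. the outward normal derivative of U is ≥ 0 at both endpoints). If x₀ ∈ [0,1] is a point where U attains its minimum over [0,1], then h(x₀, U(x₀)) ≤ 0. -/
open Set

/-- One-dimensional elliptic minimum principle (Lemma 2.1(ii)):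
if `U'' + h(x, U) ≤ 0` on `(0,1)`, `U'(0) ≤ 0`, `U'(1) ≥ 0`, and `U` attains its
minimum over `[0,1]` at `x₀`, then `h(x₀, U(x₀)) ≤ 0`. -/
theorem stmt_1 (h : ℝ → ℝ → ℝ) (U U' U'' : ℝ → ℝ)
    (hcont : ContinuousOn (fun p : ℝ × ℝ => h p.1 p.2) (Icc 0 1 ×ˢ univ))
    (hU : ∀ x ∈ Icc (0:ℝ) 1, HasDerivWithinAt U (U' x) (Icc 0 1) x)
    (hU'cont : ContinuousOn U' (Icc 0 1))
    (hU'' : ∀ x ∈ Ioo (0:ℝ) 1, HasDerivAt U' (U'' x) x)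
    (hineq : ∀ x ∈ Ioo (0:ℝ) 1, U'' x + h x (U x) ≤ 0)
    (h0 : U' 0 ≤ 0) (h1 : 0 ≤ U' 1)
    (x₀ : ℝ) (hx₀ : x₀ ∈ Icc (0:ℝ) 1)
    (hmin : ∀ x ∈ Icc (0:ℝ) 1, U x₀ ≤ U x) :
    h x₀ (U x₀) ≤ 0 := by
  by_contra hc
  push_neg at hc
  have hUcont : ContinuousOn U (Icc 0 1) := fun x hx => (hU x hx).continuousWithinAt
  have hg : ContinuousOn (fun x => h x (U x)) (Icc 0 1) := by
    have : (fun x => h x (U x)) = (fun p : ℝ × ℝ => h p.1 p.2) ∘ (fun x => (x, U x)) := rfl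
    rw [this]
    exact hcont.comp (ContinuousOn.prodMk continuousOn_id hUcont) (fun x hx => ⟨hx, mem_univ _⟩)
  -- positivity of h x (U x) near x₀
  have hev : {x | 0 < h x (U x)} ∈ nhdsWithin x₀ (Icc 0 1) :=
    (hg x₀ hx₀) (Ioi_mem_nhds hc)
  obtain ⟨δ, hδ, hball⟩ := Metric.mem_nhdsWithin_iff.mp hev
  -- second derivative is negative where h x (U x) > 0
  have hU''neg : ∀ x ∈ Ioo (0:ℝ) 1, 0 < h x (U x) → U'' x < 0 := by
    intro x hx hpos
    have := hineq x hx
    linarith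
  -- derivative of U inside is U'
  have hUderiv : ∀ x ∈ Ioo (0:ℝ) 1, HasDerivAt U (U' x) x := by
    intro x hx
    exact (hU x (Ioo_subset_Icc_self hx)).hasDerivAt
      (Icc_mem_nhds hx.1 hx.2)
  rcases lt_or_eq_of_le hx₀.2 with hlt | heq
  · -- case x₀ < 1 : U decreases strictly to the right of x₀
    set y : ℝ := min 1 (x₀ + δ / 2) with hy
    have hyx : x₀ < y := lt_min hlt (by linarith)
    have hy1 : y ≤ 1 := min_le_left _ _
    have hyI : y ∈ Icc (0:ℝ) 1 := ⟨le_trans hx₀.1 hyx.le, hy1⟩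
    have hsub : Icc x₀ y ⊆ Icc 0 1 := Icc_subset_Icc hx₀.1 hy1
    have hnear : ∀ x ∈ Icc x₀ y, 0 < h x (U x) := by
      intro x hx
      apply hball
      refine ⟨Metric.mem_ball.mpr ?_, hsub hx⟩
      rw [Real.dist_eq, abs_sub_lt_iff]
      constructor
      · have : x ≤ x₀ + δ / 2 := le_trans hx.2 (min_le_right _ _)
        linarith
      · have := hx.1; linarith
    have hIoo : Ioo x₀ y ⊆ Ioo 0 1 := fun x hx =>
      ⟨lt_of_le_of_lt hx₀.1 hx.1, lt_of_lt_of_le hx.2 hy1⟩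
    -- U' is strictly decreasing on [x₀, y]
    have hU'anti : StrictAntiOn U' (Icc x₀ y) := by
      apply strictAntiOn_of_deriv_neg (convex_Icc _ _) (hU'cont.mono hsub)
      intro x hx
      rw [interior_Icc] at hx
      rw [(hU'' x (hIoo hx)).deriv]
      exact hU''neg x (hIoo hx) (hnear x (Ioo_subset_Icc_self hx))
    -- U'(x₀) ≤ 0
    have hU'x₀ : U' x₀ ≤ 0 := by
      rcases eq_or_lt_of_le hx₀.1 with h0' | h0'
      · rw [← h0']; exact h0
      · have hloc : IsLocalMin U x₀ := by
          have : Icc (0:ℝ) 1 ∈ nhds x₀ := Icc_mem_nhds h0' hlt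
          exact Filter.eventually_of_mem this hmin
        rw [hloc.hasDerivAt_eq_zero (hUderiv x₀ ⟨h0', hlt⟩)]
    -- hence U' < 0 on (x₀, y], so U is strictly decreasing on [x₀, y]
    have hUanti : StrictAntiOn U (Icc x₀ y) := by
      apply strictAntiOn_of_deriv_neg (convex_Icc _ _) (hUcont.mono hsub)
      intro x hx
      rw [interior_Icc] at hx
      rw [(hUderiv x (hIoo hx)).deriv]
      calc U' x < U' x₀ := hU'anti (left_mem_Icc.mpr hyx.le) (Ioo_subset_Icc_self hx) hx.1
        _ ≤ 0 := hU'x₀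
    have : U y < U x₀ := hUanti (left_mem_Icc.mpr hyx.le) (right_mem_Icc.mpr hyx.le) hyx
    exact absurd (hmin y hyI) (not_le.mpr this)
  · -- case x₀ = 1 : U increases strictly to the left of 1
    subst heq
    set y : ℝ := max 0 (1 - δ / 2) with hy
    have hyx : y < 1 := by
      apply max_lt (by norm_num) (by linarith)
    have hy0 : 0 ≤ y := le_max_left _ _
    have hyI : y ∈ Icc (0:ℝ) 1 := ⟨hy0, hyx.le⟩
    have hsub : Icc y 1 ⊆ Icc 0 1 := Icc_subset_Icc hy0 le_rfl
    have hnear : ∀ x ∈ Icc y 1, 0 < h x (U x) := by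
      intro x hx
      apply hball
      refine ⟨Metric.mem_ball.mpr ?_, hsub hx⟩
      rw [Real.dist_eq, abs_sub_lt_iff]
      constructor
      · have := hx.2; linarith
      · have : 1 - δ / 2 ≤ x := le_trans (le_max_right _ _) hx.1
        linarith
    have hIoo : Ioo y 1 ⊆ Ioo 0 1 := fun x hx =>
      ⟨lt_of_le_of_lt hy0 hx.1, hx.2⟩
    have hU'anti : StrictAntiOn U' (Icc y 1) := by
      apply strictAntiOn_of_deriv_neg (convex_Icc _ _) (hU'cont.mono hsub)
      intro x hx
      rw [interior_Icc] at hx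
      rw [(hU'' x (hIoo hx)).deriv]
      exact hU''neg x (hIoo hx) (hnear x (Ioo_subset_Icc_self hx))
    -- U' > 0 on [y, 1), so U is strictly increasing on [y, 1]
    have hUmono : StrictMonoOn U (Icc y 1) := by
      apply strictMonoOn_of_deriv_pos (convex_Icc _ _) (hUcont.mono hsub)
      intro x hx
      rw [interior_Icc] at hx
      rw [(hUderiv x (hIoo hx)).deriv]
      calc (0:ℝ) ≤ U' 1 := h1
        _ < U' x := hU'anti (Ioo_subset_Icc_self hx) (right_mem_Icc.mpr hyx.le) hx.2
    have : U y < U 1 := hUmono (left_mem_Icc.mpr hyx.le) (right_mem_Icc.mpr hyx.le) hyx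
    exact absurd (hmin y hyI) (not_le.mpr this)
end

section
/- Let d > 0 and let w : [0,1] → ℝ be twice continuously differentiable with w'(0) = w'(1) = 0, satisfying d·w''(x) + (w₊(x)/δ)·(a₁ − b₁·w₊(x)/δ) − w₋(x)·(a₂ − c₂·w₋(x)/γ) = 0 for all x ∈ [0,1], where w₊ := max{w, 0} and w₋ := −min{w, 0}, together with the integral constraint ∫₀¹ (w₊(x)/δ)·(a₁ − b₁·w₊(x)/δ) dx = 0. Then w is constant, and its value is one of δa₁/b₁, 0, or −γa₂/c₂. -/
open Set
open MeasureTheory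


/-- Strict monotonicity from positive derivative on a subinterval of `[0,1]`. -/
lemma aux_strictMonoOn (f f' : ℝ → ℝ)
    (hf : ∀ x ∈ Icc (0:ℝ) 1, HasDerivWithinAt f (f' x) (Icc 0 1) x)
    {p q : ℝ} (hsub : Icc p q ⊆ Icc (0:ℝ) 1)
    (hpos : ∀ x ∈ Ioo p q, 0 < f' x) : StrictMonoOn f (Icc p q) := by
  apply strictMonoOn_of_deriv_pos (convex_Icc p q)
  · exact fun x hx => ((hf x (hsub hx)).continuousWithinAt).mono hsub
  · intro x hx
    rw [interior_Icc] at hx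
    have hxm : x ∈ Icc p q := Ioo_subset_Icc_self hx
    have hp0 : (0:ℝ) ≤ p := (hsub (left_mem_Icc.2 (le_of_lt (lt_trans hx.1 hx.2)))).1
    have hq1 : q ≤ 1 := (hsub (right_mem_Icc.2 (le_of_lt (lt_trans hx.1 hx.2)))).2
    have hx01 : x ∈ Ioo (0:ℝ) 1 := ⟨lt_of_le_of_lt hp0 hx.1, lt_of_lt_of_le hx.2 hq1⟩
    have hd : HasDerivAt f (f' x) x :=
      (hf x (hsub hxm)).hasDerivAt (Icc_mem_nhds hx01.1 hx01.2)
    rw [hd.deriv]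
    exact hpos x hx

lemma aux_strictAntiOn (f f' : ℝ → ℝ)
    (hf : ∀ x ∈ Icc (0:ℝ) 1, HasDerivWithinAt f (f' x) (Icc 0 1) x)
    {p q : ℝ} (hsub : Icc p q ⊆ Icc (0:ℝ) 1)
    (hneg : ∀ x ∈ Ioo p q, f' x < 0) : StrictAntiOn f (Icc p q) := by
  apply strictAntiOn_of_deriv_neg (convex_Icc p q)
  · exact fun x hx => ((hf x (hsub hx)).continuousWithinAt).mono hsub
  · intro x hx
    rw [interior_Icc] at hx
    have hxm : x ∈ Icc p q := Ioo_subset_Icc_self hx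
    have hp0 : (0:ℝ) ≤ p := (hsub (left_mem_Icc.2 (le_of_lt (lt_trans hx.1 hx.2)))).1
    have hq1 : q ≤ 1 := (hsub (right_mem_Icc.2 (le_of_lt (lt_trans hx.1 hx.2)))).2
    have hx01 : x ∈ Ioo (0:ℝ) 1 := ⟨lt_of_le_of_lt hp0 hx.1, lt_of_lt_of_le hx.2 hq1⟩
    have hd : HasDerivAt f (f' x) x :=
      (hf x (hsub hxm)).hasDerivAt (Icc_mem_nhds hx01.1 hx01.2)
    rw [hd.deriv]
    exact hneg x hx

/-- Neumann maximum principle on `[0,1]`. -/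
lemma aux_maxPrinc (w w' w'' : ℝ → ℝ)
    (hw : ∀ x ∈ Icc (0:ℝ) 1, HasDerivWithinAt w (w' x) (Icc 0 1) x)
    (hw' : ∀ x ∈ Icc (0:ℝ) 1, HasDerivWithinAt w' (w'' x) (Icc 0 1) x)
    (hbc0 : w' 0 = 0) (hbc1 : w' 1 = 0) (M : ℝ)
    (hpos : ∀ x ∈ Icc (0:ℝ) 1, M < w x → 0 < w'' x) :
    ∀ x ∈ Icc (0:ℝ) 1, w x ≤ M := by
  by_contra hcon
  push_neg at hcon
  obtain ⟨y, hy, hyM⟩ := hcon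
  have hcw : ContinuousOn w (Icc 0 1) := fun x hx => (hw x hx).continuousWithinAt
  obtain ⟨x₀, hx₀, hmax⟩ := isCompact_Icc.exists_isMaxOn (nonempty_Icc.2 zero_le_one) hcw
  have hM : M < w x₀ := lt_of_lt_of_le hyM (hmax hy)
  have hw'0 : w' x₀ = 0 := by
    rcases eq_or_lt_of_le hx₀.1 with h0 | h0
    · rw [← h0]; exact hbc0
    rcases eq_or_lt_of_le hx₀.2 with h1 | h1
    · rw [h1]; exact hbc1
    · have hd : HasDerivAt w (w' x₀) x₀ :=
        (hw x₀ hx₀).hasDerivAt (Icc_mem_nhds h0 h1)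
      exact (hmax.isLocalMax (Icc_mem_nhds h0 h1)).hasDerivAt_eq_zero hd
  have hev : w ⁻¹' Ioi M ∈ nhdsWithin x₀ (Icc (0:ℝ) 1) := (hcw x₀ hx₀) (Ioi_mem_nhds hM)
  rw [Metric.mem_nhdsWithin_iff] at hev
  obtain ⟨ε, hε, hball⟩ := hev
  have hkey : ∀ p q : ℝ, Icc p q ⊆ Icc (0:ℝ) 1 → (∀ x ∈ Icc p q, M < w x) →
      StrictMonoOn w' (Icc p q) := by
    intro p q hsub hin
    exact aux_strictMonoOn w' w'' hw' hsub
      (fun x hx => hpos x (hsub (Ioo_subset_Icc_self hx)) (hin x (Ioo_subset_Icc_self hx)))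
  rcases lt_or_eq_of_le hx₀.2 with hlt | h1
  · -- x₀ < 1 : go right
    set q := min (x₀ + ε/2) 1 with hq
    have hq1 : q ≤ 1 := min_le_right _ _
    have hx₀q : x₀ < q := lt_min (by linarith) hlt
    have hsub : Icc x₀ q ⊆ Icc (0:ℝ) 1 :=
      fun x hx => ⟨le_trans hx₀.1 hx.1, le_trans hx.2 hq1⟩
    have hin : ∀ x ∈ Icc x₀ q, M < w x := by
      intro x hx
      refine hball ⟨?_, hsub hx⟩
      rw [Metric.mem_ball, Real.dist_eq, abs_of_nonneg (by linarith [hx.1])]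
      have : x ≤ x₀ + ε/2 := le_trans hx.2 (min_le_left _ _)
      linarith
    have hmono' := hkey x₀ q hsub hin
    have hw'pos : ∀ x ∈ Ioo x₀ q, 0 < w' x := by
      intro x hx
      have := hmono' (left_mem_Icc.2 hx₀q.le) (Ioo_subset_Icc_self hx) hx.1
      rwa [hw'0] at this
    have hmono : StrictMonoOn w (Icc x₀ q) := aux_strictMonoOn w w' hw hsub hw'pos
    have hlt2 : w x₀ < w q :=
      hmono (left_mem_Icc.2 hx₀q.le) (right_mem_Icc.2 hx₀q.le) hx₀q
    exact absurd (hmax (hsub (right_mem_Icc.2 hx₀q.le))) (not_le.2 hlt2)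
  · -- x₀ = 1 : go left
    set p := max (x₀ - ε/2) 0 with hp
    have hp0 : (0:ℝ) ≤ p := le_max_right _ _
    have hpx₀ : p < x₀ := by
      rw [h1] at hM ⊢
      exact max_lt (by linarith) (by linarith)
    have hsub : Icc p x₀ ⊆ Icc (0:ℝ) 1 :=
      fun x hx => ⟨le_trans hp0 hx.1, le_trans hx.2 hx₀.2⟩
    have hin : ∀ x ∈ Icc p x₀, M < w x := by
      intro x hx
      refine hball ⟨?_, hsub hx⟩
      rw [Metric.mem_ball, Real.dist_eq, abs_of_nonpos (by linarith [hx.2])]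
      have : x₀ - ε/2 ≤ x := le_trans (le_max_left _ _) hx.1
      linarith
    have hmono' := hkey p x₀ hsub hin
    have hw'neg : ∀ x ∈ Ioo p x₀, w' x < 0 := by
      intro x hx
      have := hmono' (Ioo_subset_Icc_self hx) (right_mem_Icc.2 hpx₀.le) hx.2
      rwa [hw'0] at this
    have hanti : StrictAntiOn w (Icc p x₀) := aux_strictAntiOn w w' hw hsub hw'neg
    have hlt2 : w x₀ < w p :=
      hanti (left_mem_Icc.2 hpx₀.le) (right_mem_Icc.2 hpx₀.le) hpx₀
    exact absurd (hmax (hsub (left_mem_Icc.2 hpx₀.le))) (not_le.2 hlt2)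

/-- A continuous nonnegative function on `[0,1]` with zero integral vanishes. -/
lemma aux_zero_of_nonneg (g : ℝ → ℝ) (hc : ContinuousOn g (Icc 0 1))
    (hnn : ∀ x ∈ Icc (0:ℝ) 1, 0 ≤ g x)
    (hz : ∫ x in (0:ℝ)..1, g x = 0) : ∀ x ∈ Icc (0:ℝ) 1, g x = 0 := by
  have hi : IntegrableOn g (Icc 0 1) volume := hc.integrableOn_Icc
  have hzIcc : ∫ x in Icc (0:ℝ) 1, g x = 0 := by
    rw [integral_Icc_eq_integral_Ioc, ← intervalIntegral.integral_of_le zero_le_one]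
    exact hz
  have hnnae : 0 ≤ᵐ[volume.restrict (Icc (0:ℝ) 1)] g :=
    (ae_restrict_iff' measurableSet_Icc).2 (Filter.Eventually.of_forall hnn)
  have hae : g =ᵐ[volume.restrict (Icc (0:ℝ) 1)] 0 :=
    (setIntegral_eq_zero_iff_of_nonneg_ae hnnae hi).1 hzIcc
  exact fun x hx =>
    Measure.eqOn_Icc_of_ae_eq volume (zero_ne_one) hae hc continuousOn_const hx

/-- A continuous two-valued function on `[0,1]` is constant. -/
lemma aux_dichotomy (f : ℝ → ℝ) (hc : ContinuousOn f (Icc 0 1)) (c : ℝ) (hcpos : 0 < c)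
    (h : ∀ x ∈ Icc (0:ℝ) 1, f x = 0 ∨ f x = c) :
    (∀ x ∈ Icc (0:ℝ) 1, f x = 0) ∨ (∀ x ∈ Icc (0:ℝ) 1, f x = c) := by
  by_contra hcon
  push_neg at hcon
  obtain ⟨⟨x, hx, hfx⟩, ⟨y, hy, hfy⟩⟩ := hcon
  have hfxc : f x = c := (h x hx).resolve_left hfx
  have hfy0 : f y = 0 := (h y hy).resolve_right hfy
  have hsub : uIcc y x ⊆ Icc (0:ℝ) 1 := uIcc_subset_Icc hy hx
  have hiv := intermediate_value_uIcc (hc.mono hsub)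
  have hmem : c/2 ∈ uIcc (f y) (f x) := by
    rw [hfy0, hfxc, uIcc_of_le (by linarith)]
    constructor <;> linarith
  obtain ⟨z, hz, hfz⟩ := hiv hmem
  rcases h z (hsub hz) with h0 | hc'
  · rw [h0] at hfz; linarith
  · rw [hc'] at hfz; linarith


/-- Proposition 2.2 in dimension one: every solution of the complete-segregation
limiting system on `(0,1)` is one of the three constants
`δa₁/b₁`, `0`, `−γa₂/c₂`. -/
theorem stmt_2 (a₁ a₂ b₁ b₂ c₁ c₂ γ δ : ℝ)
    (ha₁ : 0 < a₁) (ha₂ : 0 < a₂) (hb₁ : 0 < b₁) (hb₂ : 0 < b₂)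
    (hc₁ : 0 < c₁) (hc₂ : 0 < c₂) (hγ : 0 < γ) (hδ : 0 < δ)
    (d : ℝ) (hd : 0 < d)
    (w w' w'' : ℝ → ℝ)
    (hw : ∀ x ∈ Icc (0:ℝ) 1, HasDerivWithinAt w (w' x) (Icc 0 1) x)
    (hw' : ∀ x ∈ Icc (0:ℝ) 1, HasDerivWithinAt w' (w'' x) (Icc 0 1) x)
    (hw'' : ContinuousOn w'' (Icc 0 1))
    (hbc0 : w' 0 = 0) (hbc1 : w' 1 = 0)
    (heq : ∀ x ∈ Icc (0:ℝ) 1,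
      d * w'' x + (max (w x) 0 / δ) * (a₁ - b₁ * max (w x) 0 / δ)
        - (-min (w x) 0) * (a₂ - c₂ * (-min (w x) 0) / γ) = 0)
    (hint : ∫ x in (0:ℝ)..1,
      (max (w x) 0 / δ) * (a₁ - b₁ * max (w x) 0 / δ) = 0) :
    (∀ x ∈ Icc (0:ℝ) 1, w x = δ * a₁ / b₁) ∨
    (∀ x ∈ Icc (0:ℝ) 1, w x = 0) ∨
    (∀ x ∈ Icc (0:ℝ) 1, w x = -(γ * a₂ / c₂)) := by
  have hMpos : 0 < δ * a₁ / b₁ := div_pos (mul_pos hδ ha₁) hb₁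
  have hNpos : 0 < γ * a₂ / c₂ := div_pos (mul_pos hγ ha₂) hc₂
  have hcw : ContinuousOn w (Icc 0 1) := fun x hx => (hw x hx).continuousWithinAt
  have hcw' : ContinuousOn w' (Icc 0 1) := fun x hx => (hw' x hx).continuousWithinAt
  -- Upper bound w ≤ δ a₁ / b₁ via the maximum principle
  have hub : ∀ x ∈ Icc (0:ℝ) 1, w x ≤ δ * a₁ / b₁ := by
    apply aux_maxPrinc w w' w'' hw hw' hbc0 hbc1
    intro x hx hMx
    have hwx : 0 < w x := lt_trans hMpos hMx
    have hmax0 : max (w x) 0 = w x := max_eq_left hwx.le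
    have hmin0 : min (w x) 0 = 0 := min_eq_right hwx.le
    have he := heq x hx
    rw [hmax0, hmin0] at he
    rw [neg_zero, zero_mul, sub_zero] at he
    have h1 : 0 < w x / δ := div_pos hwx hδ
    have h2 : a₁ - b₁ * w x / δ < 0 := by
      rw [sub_neg, lt_div_iff₀ hδ]
      have := (div_lt_iff₀ hb₁).1 hMx
      nlinarith
    have h3 : (w x / δ) * (a₁ - b₁ * w x / δ) < 0 := mul_neg_of_pos_of_neg h1 h2
    by_contra hcon
    push_neg at hcon
    nlinarith
  -- Lower bound w ≥ -(γ a₂ / c₂)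
  have hlb : ∀ x ∈ Icc (0:ℝ) 1, -(γ * a₂ / c₂) ≤ w x := by
    have := aux_maxPrinc (fun x => -w x) (fun x => -w' x) (fun x => -w'' x)
      (fun x hx => (hw x hx).neg) (fun x hx => (hw' x hx).neg)
      (by simp [hbc0]) (by simp [hbc1]) (γ * a₂ / c₂) ?_
    · intro x hx; have := this x hx; linarith
    intro x hx hNx
    have hwx : w x < 0 := by linarith
    have hmax0 : max (w x) 0 = 0 := max_eq_right hwx.le
    have hmin0 : min (w x) 0 = w x := min_eq_left hwx.le
    have he := heq x hx
    rw [hmax0, hmin0, zero_div, zero_mul, add_zero] at he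
    have h1 : 0 < -w x := by linarith [hNpos]
    have h2 : a₂ - c₂ * -w x / γ < 0 := by
      rw [sub_neg, lt_div_iff₀ hγ]
      have := (div_lt_iff₀ hc₂).1 hNx
      nlinarith
    have h3 : (-w x) * (a₂ - c₂ * -w x / γ) < 0 := mul_neg_of_pos_of_neg h1 h2
    by_contra hcon
    push_neg at hcon
    nlinarith
  -- continuity of the reaction terms
  have hmaxc : ContinuousOn (fun x => max (w x) 0) (Icc (0:ℝ) 1) := hcw.sup continuousOn_const
  have hming : ContinuousOn (fun x => -min (w x) 0) (Icc (0:ℝ) 1) :=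
    (hcw.inf continuousOn_const).neg
  have hcg₁ : ContinuousOn
      (fun x => (max (w x) 0 / δ) * (a₁ - b₁ * max (w x) 0 / δ)) (Icc (0:ℝ) 1) :=
    (hmaxc.div_const δ).mul
      (continuousOn_const.sub ((continuousOn_const.mul hmaxc).div_const δ))
  have hcg₂ : ContinuousOn
      (fun x => (-min (w x) 0) * (a₂ - c₂ * (-min (w x) 0) / γ)) (Icc (0:ℝ) 1) :=
    hming.mul (continuousOn_const.sub ((continuousOn_const.mul hming).div_const γ))
  -- FTC: ∫ w'' = 0
  have hii : IntervalIntegrable w'' volume 0 1 := by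
    apply ContinuousOn.intervalIntegrable
    rwa [uIcc_of_le zero_le_one]
  have hftc0 : ∫ x in (0:ℝ)..1, w'' x = 0 := by
    have := intervalIntegral.integral_eq_sub_of_hasDeriv_right_of_le zero_le_one hcw'
      (fun x hx => ((hw' x (Ioo_subset_Icc_self hx)).hasDerivAt
        (Icc_mem_nhds hx.1 hx.2)).hasDerivWithinAt) hii
    rw [this, hbc0, hbc1]; ring
  have hig₁ : IntervalIntegrable
      (fun x => (max (w x) 0 / δ) * (a₁ - b₁ * max (w x) 0 / δ)) volume 0 1 := by
    apply ContinuousOn.intervalIntegrable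
    rwa [uIcc_of_le zero_le_one]
  -- ∫ of the second reaction term is zero
  have hzg₂ : ∫ x in (0:ℝ)..1, (-min (w x) 0) * (a₂ - c₂ * (-min (w x) 0) / γ) = 0 := by
    have hsum : (∫ x in (0:ℝ)..1, (-min (w x) 0) * (a₂ - c₂ * (-min (w x) 0) / γ))
        = ∫ x in (0:ℝ)..1,
            (d * w'' x + (max (w x) 0 / δ) * (a₁ - b₁ * max (w x) 0 / δ)) := by
      apply intervalIntegral.integral_congr
      intro x hx
      have hx' : x ∈ Icc (0:ℝ) 1 := by rwa [uIcc_of_le zero_le_one] at hx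
      have h := heq x hx'
      simp only
      linarith
    rw [hsum, intervalIntegral.integral_add (hii.const_mul d) hig₁,
      intervalIntegral.integral_const_mul, hftc0, hint]
    ring
  -- nonnegativity of reaction terms
  have hnn₁ : ∀ x ∈ Icc (0:ℝ) 1,
      0 ≤ (max (w x) 0 / δ) * (a₁ - b₁ * max (w x) 0 / δ) := by
    intro x hx
    have hle : max (w x) 0 ≤ δ * a₁ / b₁ := max_le (hub x hx) hMpos.le
    apply mul_nonneg (div_nonneg (le_max_right _ _) hδ.le)
    rw [sub_nonneg, div_le_iff₀ hδ]
    have := (le_div_iff₀ hb₁).1 hle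
    nlinarith
  have hnn₂ : ∀ x ∈ Icc (0:ℝ) 1,
      0 ≤ (-min (w x) 0) * (a₂ - c₂ * (-min (w x) 0) / γ) := by
    intro x hx
    have hge : -(γ * a₂ / c₂) ≤ min (w x) 0 := le_min (hlb x hx) (by linarith)
    have hle : -min (w x) 0 ≤ γ * a₂ / c₂ := by linarith
    apply mul_nonneg (by simp [min_le_right (w x) 0])
    rw [sub_nonneg, div_le_iff₀ hγ]
    have := (le_div_iff₀ hc₂).1 hle
    nlinarith
  -- reaction terms vanish identically
  have hz₁ := aux_zero_of_nonneg _ hcg₁ hnn₁ hint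
  have hz₂ := aux_zero_of_nonneg _ hcg₂ hnn₂ hzg₂
  -- two-valuedness
  have htv₁ : ∀ x ∈ Icc (0:ℝ) 1, max (w x) 0 = 0 ∨ max (w x) 0 = δ * a₁ / b₁ := by
    intro x hx
    have h := hz₁ x hx
    rcases mul_eq_zero.1 h with h0 | h0
    · left; exact (div_eq_zero_iff.1 h0).resolve_right hδ.ne'
    · right
      rw [sub_eq_zero] at h0
      rw [eq_div_iff hb₁.ne']
      field_simp at h0
      linarith
  have htv₂ : ∀ x ∈ Icc (0:ℝ) 1, -min (w x) 0 = 0 ∨ -min (w x) 0 = γ * a₂ / c₂ := by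
    intro x hx
    have h := hz₂ x hx
    rcases mul_eq_zero.1 h with h0 | h0
    · left; exact h0
    · right
      rw [sub_eq_zero] at h0
      rw [eq_div_iff hc₂.ne']
      field_simp at h0
      linarith
  have hP := aux_dichotomy (fun x => max (w x) 0) hmaxc _ hMpos htv₁
  have hQ := aux_dichotomy (fun x => -min (w x) 0) hming _ hNpos htv₂
  rcases hP with hP | hP
  · rcases hQ with hQ | hQ
    · right; left
      intro x hx
      have h1 := hP x hx
      have h2 := hQ x hx
      have hle : w x ≤ 0 := le_trans (le_max_left _ _) (le_of_eq h1)
      have hge : 0 ≤ w x := by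
        have := min_le_left (w x) 0; linarith
      linarith
    · right; right
      intro x hx
      have h2 := hQ x hx
      have hmn : min (w x) 0 = -(γ * a₂ / c₂) := by linarith
      have hwneg : w x < 0 := by
        by_contra h; push_neg at h
        rw [min_eq_right h] at hmn; linarith
      rw [min_eq_left hwneg.le] at hmn
      rw [hmn]
  · left
    intro x hx
    have h1 := hP x hx
    have hwpos : 0 < w x := by
      by_contra h; push_neg at h
      rw [max_eq_right h] at h1; linarith
    rw [max_eq_left hwpos.le] at h1
    exact h1
end

section
/- Let τ > 0 and let u : [0,1] → ℝ be continuous with u(x) > 0 for all x ∈ [0,1]. Assume the two integral constraints ∫₀¹ (u(x)·(a₁ − b₁·u(x)) − c₁τ) dx = 0 and ∫₀¹ (τ/u(x))·(a₂ − b₂·u(x) − c₂·τ/u(x)) dx = 0. Then τ ≤ min{ a₁²/(4b₁c₁), a₂²/(4b₂c₂) }. -/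
open Set

/-- A priori bound on the segregation constant `τ` (part of Theorem 3.1 / Lemma 4.1):
the two integral constraints `∫ f(u, τ/u) = 0` and `∫ g(u, τ/u) = 0` force
`τ ≤ min (a₁²/(4b₁c₁)) (a₂²/(4b₂c₂))`. -/
theorem stmt_3 (a₁ a₂ b₁ b₂ c₁ c₂ : ℝ)
    (ha₁ : 0 < a₁) (ha₂ : 0 < a₂) (hb₁ : 0 < b₁) (hb₂ : 0 < b₂)
    (hc₁ : 0 < c₁) (hc₂ : 0 < c₂)
    (τ : ℝ) (hτ : 0 < τ)
    (u : ℝ → ℝ) (hu : ContinuousOn u (Icc 0 1))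
    (hupos : ∀ x ∈ Icc (0:ℝ) 1, 0 < u x)
    (hint1 : ∫ x in (0:ℝ)..1, (u x * (a₁ - b₁ * u x) - c₁ * τ) = 0)
    (hint2 : ∫ x in (0:ℝ)..1,
      (τ / u x) * (a₂ - b₂ * u x - c₂ * τ / u x) = 0) :
    τ ≤ min (a₁ ^ 2 / (4 * b₁ * c₁)) (a₂ ^ 2 / (4 * b₂ * c₂)) := by
  have huIcc : uIcc (0:ℝ) 1 = Icc 0 1 := by
    rw [uIcc_of_le]; norm_num
  have hune : ∀ x ∈ Icc (0:ℝ) 1, u x ≠ 0 := fun x hx => (hupos x hx).ne'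
  have hcont1 : ContinuousOn (fun x => u x * (a₁ - b₁ * u x) - c₁ * τ) (Icc 0 1) := by
    fun_prop
  have hcont2 : ContinuousOn
      (fun x => (τ / u x) * (a₂ - b₂ * u x - c₂ * τ / u x)) (Icc 0 1) := by
    apply ContinuousOn.mul
    · exact continuousOn_const.div hu hune
    · apply ContinuousOn.sub
      · fun_prop
      · exact (continuousOn_const.mul continuousOn_const).div hu hune
  have hi1 : IntervalIntegrable (fun x => u x * (a₁ - b₁ * u x) - c₁ * τ)
      MeasureTheory.volume 0 1 := (huIcc ▸ hcont1).intervalIntegrable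
  have hi2 : IntervalIntegrable
      (fun x => (τ / u x) * (a₂ - b₂ * u x - c₂ * τ / u x))
      MeasureTheory.volume 0 1 := (huIcc ▸ hcont2).intervalIntegrable
  refine le_min ?_ ?_
  · -- first bound
    have hbd : ∀ x ∈ Icc (0:ℝ) 1,
        u x * (a₁ - b₁ * u x) - c₁ * τ ≤ a₁ ^ 2 / (4 * b₁) - c₁ * τ := by
      intro x hx
      have h := hupos x hx
      have hsq : 0 ≤ b₁ * (u x - a₁ / (2 * b₁)) ^ 2 := by positivity
      have : u x * (a₁ - b₁ * u x) ≤ a₁ ^ 2 / (4 * b₁) := by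
        rw [le_div_iff₀ (by positivity)]
        nlinarith [sq_nonneg (2 * b₁ * u x - a₁)]
      linarith
    have hmono := intervalIntegral.integral_mono_on (by norm_num : (0:ℝ) ≤ 1)
      hi1 (intervalIntegrable_const) hbd
    rw [hint1, intervalIntegral.integral_const] at hmono
    simp at hmono
    rw [le_div_iff₀ (by positivity)] at hmono ⊢
    nlinarith
  · -- second bound
    have hbd : ∀ x ∈ Icc (0:ℝ) 1,
        (τ / u x) * (a₂ - b₂ * u x - c₂ * τ / u x) ≤ a₂ ^ 2 / (4 * c₂) - b₂ * τ := by
      intro x hx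
      have h := hupos x hx
      set v := τ / u x with hv
      have hvpos : 0 < v := div_pos hτ h
      have hvu : v * u x = τ := div_mul_cancel₀ τ h.ne'
      have hkey : a₂ * v - c₂ * v ^ 2 ≤ a₂ ^ 2 / (4 * c₂) := by
        rw [le_div_iff₀ (by positivity)]
        nlinarith [sq_nonneg (2 * c₂ * v - a₂)]
      have hrw : (τ / u x) * (a₂ - b₂ * u x - c₂ * τ / u x)
          = a₂ * v - c₂ * v ^ 2 - b₂ * τ := by
        rw [← hvu]; field_simp; ring
      rw [hrw]; linarith
    have hmono := intervalIntegral.integral_mono_on (by norm_num : (0:ℝ) ≤ 1)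
      hi2 (intervalIntegrable_const) hbd
    rw [hint2, intervalIntegral.integral_const] at hmono
    simp at hmono
    rw [le_div_iff₀ (by positivity)] at hmono ⊢
    nlinarith
end

section
/- There exists a constant C* > 0, depending only on a₁, a₂, b₁, b₂, c₁, c₂, γ, δ, such that for every d > 0 and every solution (w, τ) of the one-dimensional limiting system with diffusion coefficient d, one has max_{x ∈ [0,1]} |w(x)| ≤ C* and τ ≤ min{ a₁²/(4b₁c₁), a₂²/(4b₂c₂) }. -/
open Set

/-- The nonlinearity `h(u,τ) = u(a₁ − b₁u) − c₁τ − (γτ/u)(a₂ − b₂u − c₂τ/u)`. -/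
noncomputable def hfun (a₁ a₂ b₁ b₂ c₁ c₂ γ : ℝ) (u τ : ℝ) : ℝ :=
  u * (a₁ - b₁ * u) - c₁ * τ - (γ * τ / u) * (a₂ - b₂ * u - c₂ * τ / u)

/-- The change of variables `U(w,τ) = (√(w² + 4γδτ) + w)/(2δ)`. -/
noncomputable def Ufun (γ δ : ℝ) (w τ : ℝ) : ℝ :=
  (Real.sqrt (w ^ 2 + 4 * γ * δ * τ) + w) / (2 * δ)

lemma Ufun_pos {γ δ w τ : ℝ} (hγ : 0 < γ) (hδ : 0 < δ) (hτ : 0 < τ) :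
    0 < Ufun γ δ w τ := by
  unfold Ufun
  apply div_pos _ (by linarith)
  have hs : |w| < Real.sqrt (w ^ 2 + 4 * γ * δ * τ) := by
    rw [show |w| = Real.sqrt (w^2) by rw [Real.sqrt_sq_eq_abs]]
    apply Real.sqrt_lt_sqrt (sq_nonneg w)
    nlinarith [mul_pos (mul_pos hγ hδ) hτ]
  linarith [neg_abs_le w]

lemma Ufun_eq {γ δ w τ : ℝ} (hγ : 0 < γ) (hδ : 0 < δ) (hτ : 0 < τ) :
    δ * (Ufun γ δ w τ) ^ 2 = w * Ufun γ δ w τ + γ * τ := by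
  unfold Ufun
  have h : Real.sqrt (w ^ 2 + 4 * γ * δ * τ) ^ 2 = w ^ 2 + 4 * γ * δ * τ :=
    Real.sq_sqrt (by nlinarith [mul_pos (mul_pos hγ hδ) hτ])
  field_simp
  rw [show w ^ 2 + δ * 4 * γ * τ = w ^ 2 + 4 * γ * δ * τ by ring]
  nlinarith [h]

lemma hfun_mul_sq {a₁ a₂ b₁ b₂ c₁ c₂ γ u τ : ℝ} (hu : u ≠ 0) :
    hfun a₁ a₂ b₁ b₂ c₁ c₂ γ u τ * u ^ 2 =
      a₁*u^3 - b₁*u^4 - c₁*τ*u^2 - γ*τ*a₂*u + γ*τ*b₂*u^2 + γ*c₂*τ^2 := by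
  unfold hfun
  field_simp
  ring

lemma max_principle (w w' w'' : ℝ → ℝ)
    (hw : ∀ x ∈ Icc (0:ℝ) 1, HasDerivWithinAt w (w' x) (Icc 0 1) x)
    (hw' : ∀ x ∈ Icc (0:ℝ) 1, HasDerivWithinAt w' (w'' x) (Icc 0 1) x)
    (hw'' : ContinuousOn w'' (Icc 0 1))
    (hn0 : w' 0 = 0) (hn1 : w' 1 = 0)
    {x₀ : ℝ} (hx₀ : x₀ ∈ Icc (0:ℝ) 1) (hmax : IsMaxOn w (Icc 0 1) x₀) :
    w'' x₀ ≤ 0 := by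
  by_contra hflt
  push_neg at hflt
  have hwc : ContinuousOn w (Icc 0 1) := fun x hx => (hw x hx).continuousWithinAt
  have hwc' : ContinuousOn w' (Icc 0 1) := fun x hx => (hw' x hx).continuousWithinAt
  have hd0 : w' x₀ = 0 := by
    rcases eq_or_lt_of_le hx₀.1 with h0 | h0
    · rw [← h0]; exact hn0
    rcases eq_or_lt_of_le hx₀.2 with h1 | h1
    · rw [h1]; exact hn1
    · have hmem : Icc (0:ℝ) 1 ∈ nhds x₀ := Icc_mem_nhds h0 h1
      have hda : HasDerivAt w (w' x₀) x₀ := (hw x₀ hx₀).hasDerivAt hmem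
      exact (hmax.isLocalMax hmem).hasDerivAt_eq_zero hda
  have hder : ∀ x ∈ Ioo (0:ℝ) 1, deriv w x = w' x := by
    intro x hx
    exact ((hw x (Ioo_subset_Icc_self hx)).hasDerivAt (Icc_mem_nhds hx.1 hx.2)).deriv
  have hder' : ∀ x ∈ Ioo (0:ℝ) 1, deriv w' x = w'' x := by
    intro x hx
    exact ((hw' x (Ioo_subset_Icc_self hx)).hasDerivAt (Icc_mem_nhds hx.1 hx.2)).deriv
  have hcw : ContinuousWithinAt w'' (Icc 0 1) x₀ := hw'' x₀ hx₀
  rw [Metric.continuousWithinAt_iff] at hcw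
  obtain ⟨ε, hε, hball⟩ := hcw (w'' x₀) hflt
  have hpos : ∀ x ∈ Icc (0:ℝ) 1, dist x x₀ < ε → 0 < w'' x := by
    intro x hx hd
    have h2 := hball hx hd
    rw [Real.dist_eq] at h2
    linarith [(abs_lt.1 h2).1]
  rcases eq_or_lt_of_le hx₀.2 with h1 | h1
  · -- x₀ = 1 : work on the left
    set c : ℝ := max 0 (1 - ε/2) with hc
    have hc1 : c < 1 := max_lt (by norm_num) (by linarith)
    have hc0 : 0 ≤ c := le_max_left _ _
    have hsub : Icc c 1 ⊆ Icc (0:ℝ) 1 := Icc_subset_Icc hc0 le_rfl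
    have hppos : ∀ x ∈ Icc c 1, 0 < w'' x := by
      intro x hx
      refine hpos x (hsub hx) ?_
      rw [Real.dist_eq, h1, abs_lt]
      have hcl : 1 - ε/2 ≤ c := le_max_right _ _
      exact ⟨by linarith [hx.1], by linarith [hx.2]⟩
    have hmono' : StrictMonoOn w' (Icc c 1) := by
      apply strictMonoOn_of_deriv_pos (convex_Icc c 1) (hwc'.mono hsub)
      intro x hx
      rw [interior_Icc] at hx
      have hxo : x ∈ Ioo (0:ℝ) 1 := ⟨lt_of_le_of_lt hc0 hx.1, hx.2⟩
      rw [hder' x hxo]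
      exact hppos x (Ioo_subset_Icc_self hx)
    have hneg : ∀ x ∈ Ioo c 1, w' x < 0 := by
      intro x hx
      have := hmono' ⟨hx.1.le, hx.2.le⟩ (right_mem_Icc.2 hc1.le) hx.2
      rwa [hn1] at this
    have hanti : StrictAntiOn w (Icc c 1) := by
      apply strictAntiOn_of_deriv_neg (convex_Icc c 1) (hwc.mono hsub)
      intro x hx
      rw [interior_Icc] at hx
      have hxo : x ∈ Ioo (0:ℝ) 1 := ⟨lt_of_le_of_lt hc0 hx.1, hx.2⟩
      rw [hder x hxo]
      exact hneg x hx
    have := hanti (left_mem_Icc.2 hc1.le) (right_mem_Icc.2 hc1.le) hc1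
    have hle := hmax (hsub (left_mem_Icc.2 hc1.le))
    rw [h1] at hle
    simp only [mem_setOf_eq] at hle
    linarith
  · -- x₀ < 1 : work on the right
    set b : ℝ := min 1 (x₀ + ε/2) with hb
    have hxb : x₀ < b := lt_min h1 (by linarith)
    have hb1 : b ≤ 1 := min_le_left _ _
    have hsub : Icc x₀ b ⊆ Icc (0:ℝ) 1 := Icc_subset_Icc hx₀.1 hb1
    have hppos : ∀ x ∈ Icc x₀ b, 0 < w'' x := by
      intro x hx
      refine hpos x (hsub hx) ?_
      rw [Real.dist_eq, abs_lt]
      have hbl : b ≤ x₀ + ε/2 := min_le_right _ _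
      exact ⟨by linarith [hx.1], by linarith [hx.2]⟩
    have hmono' : StrictMonoOn w' (Icc x₀ b) := by
      apply strictMonoOn_of_deriv_pos (convex_Icc x₀ b) (hwc'.mono hsub)
      intro x hx
      rw [interior_Icc] at hx
      have hxo : x ∈ Ioo (0:ℝ) 1 := ⟨lt_of_le_of_lt hx₀.1 hx.1, lt_of_lt_of_le hx.2 hb1⟩
      rw [hder' x hxo]
      exact hppos x (Ioo_subset_Icc_self hx)
    have hposd : ∀ x ∈ Ioo x₀ b, 0 < w' x := by
      intro x hx
      have := hmono' (left_mem_Icc.2 hxb.le) ⟨hx.1.le, hx.2.le⟩ hx.1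
      rwa [hd0] at this
    have hmono : StrictMonoOn w (Icc x₀ b) := by
      apply strictMonoOn_of_deriv_pos (convex_Icc x₀ b) (hwc.mono hsub)
      intro x hx
      rw [interior_Icc] at hx
      have hxo : x ∈ Ioo (0:ℝ) 1 := ⟨lt_of_le_of_lt hx₀.1 hx.1, lt_of_lt_of_le hx.2 hb1⟩
      rw [hder x hxo]
      exact hposd x hx
    have := hmono (left_mem_Icc.2 hxb.le) (right_mem_Icc.2 hxb.le) hxb
    have hle := hmax (hsub (right_mem_Icc.2 hxb.le))
    simp only [mem_setOf_eq] at hle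
    linarith

lemma exists_ge_integral (f : ℝ → ℝ) (hf : ContinuousOn f (Icc 0 1)) :
    ∃ x ∈ Icc (0:ℝ) 1, (∫ t in (0:ℝ)..1, f t) ≤ f x := by
  obtain ⟨x, hx, hmax⟩ := isCompact_Icc.exists_isMaxOn (nonempty_Icc.2 zero_le_one) hf
  refine ⟨x, hx, ?_⟩
  have hint : IntervalIntegrable f MeasureTheory.volume 0 1 := by
    apply ContinuousOn.intervalIntegrable
    rwa [uIcc_of_le zero_le_one]
  calc (∫ t in (0:ℝ)..1, f t) ≤ ∫ t in (0:ℝ)..1, f x := by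
        apply intervalIntegral.integral_mono_on zero_le_one hint intervalIntegrable_const
        intro t ht; exact hmax ht
    _ = f x := by simp


section AuxArith

/-- Upper bound on `u` at the maximum point. -/
lemma arith_max {a₁ a₂ b₁ b₂ c₁ c₂ γ T τ u : ℝ}
    (hb₁ : 0 < b₁) (hc₁ : 0 < c₁) (ha₂ : 0 < a₂) (hb₂ : 0 < b₂) (hc₂ : 0 < c₂)
    (hγ : 0 < γ) (hτ : 0 < τ) (hτT : τ ≤ T) (hu : 1 < u)
    (hQ : 0 ≤ a₁*u^3 - b₁*u^4 - c₁*τ*u^2 - γ*τ*a₂*u + γ*τ*b₂*u^2 + γ*c₂*τ^2) :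
    b₁*u ≤ a₁ + (γ*T*b₂ + γ*c₂*T^2) := by
  have hT : 0 < T := lt_of_lt_of_le hτ hτT
  have hu0 : 0 < u := lt_trans one_pos hu
  have hcube : 1 ≤ u^3 := one_le_pow₀ hu.le
  have e0 : u^2 ≤ u^3 := by nlinarith
  have e1a : γ*τ*b₂*u^2 ≤ γ*T*b₂*u^2 := by
    nlinarith [mul_nonneg (mul_nonneg (mul_nonneg hγ.le hb₂.le) (sq_nonneg u)) (sub_nonneg.2 hτT)]
  have e1b : γ*T*b₂*u^2 ≤ γ*T*b₂*u^3 := by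
    nlinarith [mul_le_mul_of_nonneg_left e0 (by positivity : (0:ℝ) ≤ γ*T*b₂)]
  have e2a : τ^2 ≤ T^2 := by nlinarith
  have e2b : γ*c₂*τ^2 ≤ γ*c₂*T^2 := by
    nlinarith [mul_le_mul_of_nonneg_left e2a (by positivity : (0:ℝ) ≤ γ*c₂)]
  have e2c : γ*c₂*T^2 ≤ γ*c₂*T^2*u^3 := by
    nlinarith [mul_le_mul_of_nonneg_left hcube (by positivity : (0:ℝ) ≤ γ*c₂*T^2)]
  have e3 : 0 ≤ c₁*τ*u^2 := by positivity
  have e4 : 0 ≤ γ*τ*a₂*u := by positivity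
  have e5 : b₁*u*u^3 ≤ (a₁ + (γ*T*b₂ + γ*c₂*T^2))*u^3 := by nlinarith
  exact le_of_mul_le_mul_right e5 (pow_pos hu0 3)
/-- From the quadratic identity, an upper bound on `w` at a point. -/
lemma arith_wub {δ γ M W τ u : ℝ} (hδ : 0 < δ) (hγ : 0 < γ) (hτ : 0 < τ)
    (hu : 0 < u) (huM : u ≤ M) (hid : δ * u^2 = W * u + γ*τ) : W ≤ δ*M := by
  have h2 : W * u ≤ (δ*M)*u := by nlinarith [mul_pos hγ hτ, mul_pos hδ hu]
  exact le_of_mul_le_mul_right h2 hu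

/-- Bound on `u` at the minimum point. -/
lemma arith_u1 {δ γ M T W τ u : ℝ} (hδ : 0 < δ) (hγ : 0 < γ) (hτ : 0 < τ)
    (hu : 1 < u) (hW : W ≤ δ*M) (hτT : τ ≤ T) (hid : δ * u^2 = W * u + γ*τ) :
    u ≤ M + γ*T/δ := by
  have hu0 : 0 < u := lt_trans one_pos hu
  have key : δ*u*u ≤ (δ*M + γ*T)*u := by
    nlinarith [mul_le_mul_of_nonneg_right hW hu0.le,
      mul_nonneg hγ.le (sub_nonneg.2 hτT),
      mul_nonneg (mul_nonneg hγ.le (lt_of_lt_of_le hτ hτT).le) (sub_nonneg.2 hu.le)]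
  have key2 : δ*u ≤ δ*M + γ*T := le_of_mul_le_mul_right key hu0
  have h6 : u ≤ (δ*M + γ*T)/δ := (le_div_iff₀ hδ).2 (by nlinarith)
  have h7 : (δ*M + γ*T)/δ = M + γ*T/δ := by field_simp
  linarith [h6, h7.ge, h7.le]
/-- Key inequality at the minimum point. -/
lemma arith_min {a₁ a₂ b₁ b₂ c₁ c₂ γ T M₁ τ u : ℝ}
    (ha₁ : 0 < a₁) (hb₁ : 0 < b₁) (hc₁ : 0 < c₁) (hb₂ : 0 < b₂)
    (hγ : 0 < γ) (hτ : 0 < τ) (hτT : τ ≤ T) (hu : 0 < u) (huM : u ≤ M₁)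
    (hQ : a₁*u^3 - b₁*u^4 - c₁*τ*u^2 - γ*τ*a₂*u + γ*τ*b₂*u^2 + γ*c₂*τ^2 ≤ 0) :
    γ*c₂*τ^2 ≤ (b₁*M₁^2 + c₁*T)*u^2 + a₂*γ*τ*u := by
  have p1 : 0 ≤ a₁*u^3 := by positivity
  have p2 : 0 ≤ γ*τ*b₂*u^2 := by positivity
  have p3 : b₁*u^4 ≤ b₁*M₁^2*u^2 := by
    nlinarith [mul_le_mul_of_nonneg_left (show u^2 ≤ M₁^2 by nlinarith)
      (by positivity : (0:ℝ) ≤ b₁*u^2)]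
  have p4 : c₁*τ*u^2 ≤ c₁*T*u^2 := by nlinarith [sq_nonneg u, mul_pos hc₁ (pow_pos hu 2)]
  nlinarith [hQ, p1, p2, p3, p4]
/-- Bound `γτ ≤ N u` at the minimum point. -/
lemma arith_N {B a₂ γ c₂ N τ u : ℝ} (hγ : 0 < γ) (hc₂ : 0 < c₂) (ha₂ : 0 < a₂)
    (hB : 0 < B) (hτ : 0 < τ) (hu : 0 < u) (hN1 : 1 ≤ N) (hcN : γ*(B+a₂) ≤ N*c₂)
    (hkey : γ*c₂*τ^2 ≤ B*u^2 + a₂*γ*τ*u) : γ*τ ≤ N*u := by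
  by_contra hcon
  push_neg at hcon
  nlinarith [hkey, mul_pos (sub_pos.2 hcon) (mul_pos (mul_pos hγ hτ) hc₂),
    mul_le_mul_of_nonneg_right hcN (mul_nonneg hu.le (mul_pos hγ hτ).le),
    mul_nonneg (mul_nonneg (mul_nonneg hγ.le hB.le) hu.le)
      (by nlinarith : (0:ℝ) ≤ γ*τ - u),
    mul_pos hγ hτ]

/-- Lower bound on `w` at the minimum point. -/
lemma arith_wlb {δ γ N W τ u : ℝ} (hδ : 0 < δ) (hγ : 0 < γ) (hτ : 0 < τ)
    (hu : 0 < u) (hγτN : γ*τ ≤ N*u) (hid : δ * u^2 = W * u + γ*τ) : -N ≤ W := by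
  have h2 : (-N) * u ≤ W * u := by nlinarith [sq_nonneg u, mul_pos hδ (pow_pos hu 2)]
  exact le_of_mul_le_mul_right h2 hu

end AuxArith

set_option maxHeartbeats 2000000 in
/-- A priori bound for the one-dimensional limiting system (Theorem 3.1): there is a
constant `C*` depending only on the data such that every solution `(w, τ)` with any
diffusion coefficient `d > 0` satisfies `‖w‖_∞ ≤ C*` and
`τ ≤ min (a₁²/(4b₁c₁)) (a₂²/(4b₂c₂))`. -/
theorem stmt_4 (a₁ a₂ b₁ b₂ c₁ c₂ γ δ : ℝ)
    (ha₁ : 0 < a₁) (ha₂ : 0 < a₂) (hb₁ : 0 < b₁) (hb₂ : 0 < b₂)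
    (hc₁ : 0 < c₁) (hc₂ : 0 < c₂) (hγ : 0 < γ) (hδ : 0 < δ) :
    ∃ Cstar > 0, ∀ d : ℝ, 0 < d → ∀ (τ : ℝ) (w w' w'' : ℝ → ℝ), 0 < τ →
      (∀ x ∈ Icc (0:ℝ) 1, HasDerivWithinAt w (w' x) (Icc 0 1) x) →
      (∀ x ∈ Icc (0:ℝ) 1, HasDerivWithinAt w' (w'' x) (Icc 0 1) x) →
      ContinuousOn w'' (Icc 0 1) →
      (∀ x ∈ Icc (0:ℝ) 1,
        d * w'' x + hfun a₁ a₂ b₁ b₂ c₁ c₂ γ (Ufun γ δ (w x) τ) τ = 0) →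
      w' 0 = 0 → w' 1 = 0 →
      (∫ x in (0:ℝ)..1,
        (Ufun γ δ (w x) τ * (a₁ - b₁ * Ufun γ δ (w x) τ) - c₁ * τ)) = 0 →
      (∀ x ∈ Icc (0:ℝ) 1, |w x| ≤ Cstar) ∧
        τ ≤ min (a₁ ^ 2 / (4 * b₁ * c₁)) (a₂ ^ 2 / (4 * b₂ * c₂)) := by
  set T : ℝ := min (a₁ ^ 2 / (4 * b₁ * c₁)) (a₂ ^ 2 / (4 * b₂ * c₂)) with hTdef
  have hT : 0 < T := lt_min (by positivity) (by positivity)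
  set K : ℝ := γ*T*b₂ + γ*c₂*T^2 with hKdef
  have hK : 0 < K := by positivity
  set M : ℝ := max 1 ((a₁+K)/b₁) with hMdef
  have hM1 : (1:ℝ) ≤ M := le_max_left _ _
  set M₁ : ℝ := max 1 (M + γ*T/δ) with hM₁def
  have hM₁1 : (1:ℝ) ≤ M₁ := le_max_left _ _
  set B : ℝ := b₁*M₁^2 + c₁*T with hBdef
  have hB : 0 < B := by positivity
  set N : ℝ := max 1 (γ*(B+a₂)/c₂) with hNdef
  have hN1 : (1:ℝ) ≤ N := le_max_left _ _
  refine ⟨max (δ*M) N, lt_of_lt_of_le (by linarith) (le_max_right _ _), ?_⟩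
  intro d hd τ w w' w'' hτ hw hw' hw'' heq hn0 hn1 hint
  set u : ℝ → ℝ := fun x => Ufun γ δ (w x) τ with hudef
  have hu_pos : ∀ x, 0 < u x := fun x => Ufun_pos hγ hδ hτ
  have hu_id : ∀ x, δ * (u x)^2 = w x * u x + γ*τ := fun x => Ufun_eq hγ hδ hτ
  have hwc : ContinuousOn w (Icc 0 1) := fun x hx => (hw x hx).continuousWithinAt
  have hwc' : ContinuousOn w' (Icc 0 1) := fun x hx => (hw' x hx).continuousWithinAt
  have huc : ContinuousOn u (Icc 0 1) := by
    unfold u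
    unfold Ufun
    apply ContinuousOn.div_const
    apply ContinuousOn.add _ hwc
    exact Real.continuous_sqrt.comp_continuousOn (by fun_prop)
  set f : ℝ → ℝ := fun x => u x * (a₁ - b₁ * u x) - c₁ * τ with hfdef
  have hfc : ContinuousOn f (Icc 0 1) := by fun_prop
  have hfint : IntervalIntegrable f MeasureTheory.volume 0 1 := by
    apply ContinuousOn.intervalIntegrable
    rwa [uIcc_of_le zero_le_one]
  have hw''int : IntervalIntegrable w'' MeasureTheory.volume 0 1 := by
    apply ContinuousOn.intervalIntegrable
    rwa [uIcc_of_le zero_le_one]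
  -- first τ bound
  have hτ1 : τ ≤ a₁ ^ 2 / (4 * b₁ * c₁) := by
    obtain ⟨xf, hxf, hfge⟩ := exists_ge_integral f hfc
    rw [hint] at hfge
    rw [le_div_iff₀ (by positivity)]
    simp only [hfdef] at hfge
    nlinarith [sq_nonneg (a₁ - 2*b₁*u xf), hu_pos xf, hfge]
  -- ∫ w'' = 0
  have hI2 : (∫ x in (0:ℝ)..1, w'' x) = 0 := by
    rw [intervalIntegral.integral_eq_sub_of_hasDeriv_right_of_le zero_le_one hwc'
      (fun x hx => (((hw' x (Ioo_subset_Icc_self hx)).hasDerivAt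
        (Icc_mem_nhds hx.1 hx.2)).hasDerivWithinAt)) hw''int, hn0, hn1]
    ring
  -- second τ bound
  set g : ℝ → ℝ := fun x => f x + d * w'' x with hgdef
  have hgc : ContinuousOn g (Icc 0 1) := hfc.add (hw''.const_smul d)
  have hgint : (∫ x in (0:ℝ)..1, g x) = 0 := by
    unfold g
    rw [intervalIntegral.integral_add hfint (hw''int.const_mul d), hint,
      intervalIntegral.integral_const_mul, hI2]
    ring
  have hτ2 : τ ≤ a₂ ^ 2 / (4 * b₂ * c₂) := by
    obtain ⟨xg, hxg, hgge⟩ := exists_ge_integral g hgc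
    rw [hgint] at hgge
    have heqx := heq xg hxg
    have hgval : g xg = (γ*τ/u xg) * (a₂ - b₂*u xg - c₂*τ/u xg) := by
      simp only [hgdef, hfdef]
      rw [show d * w'' xg = -(hfun a₁ a₂ b₁ b₂ c₁ c₂ γ (u xg) τ) by linarith]
      unfold hfun
      ring
    rw [hgval] at hgge
    have hUpos : 0 < u xg := hu_pos xg
    set Ug : ℝ := u xg with hUgdef
    clear_value Ug
    have hcpos : 0 < γ*τ/Ug := div_pos (mul_pos hγ hτ) hUpos
    have hA : 0 ≤ a₂ - b₂*Ug - c₂*τ/Ug := by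
      by_contra hA
      push_neg at hA
      nlinarith [mul_pos hcpos (neg_pos.2 hA)]
    set v : ℝ := c₂*τ/Ug with hvdef
    have hv : v * Ug = c₂ * τ := div_mul_cancel₀ _ (ne_of_gt hUpos)
    have hvpos : 0 < v := div_pos (mul_pos hc₂ hτ) hUpos
    clear_value v
    have key : 4*(b₂*Ug)*v ≤ (b₂*Ug + v)^2 := by nlinarith [sq_nonneg (b₂*Ug - v)]
    have key2 : b₂*Ug + v ≤ a₂ := by linarith
    have key3 : (b₂*Ug + v)^2 ≤ a₂^2 := by nlinarith [mul_pos hb₂ hUpos]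
    rw [le_div_iff₀ (by positivity)]
    nlinarith [key, key3, hv]
  have hτT : τ ≤ T := le_min hτ1 hτ2
  refine ⟨?_, hτT⟩
  -- max and min points
  obtain ⟨x₀, hx₀, hmax⟩ := isCompact_Icc.exists_isMaxOn (nonempty_Icc.2 zero_le_one) hwc
  obtain ⟨x₁, hx₁, hmin⟩ := isCompact_Icc.exists_isMinOn (nonempty_Icc.2 zero_le_one) hwc
  have h0'' : w'' x₀ ≤ 0 := max_principle w w' w'' hw hw' hw'' hn0 hn1 hx₀ hmax
  have h1'' : 0 ≤ w'' x₁ := by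
    have := max_principle (fun x => -w x) (fun x => -w' x) (fun x => -w'' x)
      (fun x hx => (hw x hx).neg) (fun x hx => (hw' x hx).neg) (hw''.neg)
      (by simp [hn0]) (by simp [hn1]) hx₁ (fun y hy => by simp [mem_setOf_eq, hmin hy])
    simpa using this
  -- h ≥ 0 at max, h ≤ 0 at min
  have hhmax : 0 ≤ hfun a₁ a₂ b₁ b₂ c₁ c₂ γ (u x₀) τ := by
    have := heq x₀ hx₀
    nlinarith [mul_nonpos_of_nonneg_of_nonpos hd.le h0'']
  have hhmin : hfun a₁ a₂ b₁ b₂ c₁ c₂ γ (u x₁) τ ≤ 0 := by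
    have := heq x₁ hx₁
    nlinarith [mul_nonneg hd.le h1'']
  set u₀ : ℝ := u x₀ with hu₀def
  set u₁ : ℝ := u x₁ with hu₁def
  have hu₀ : 0 < u₀ := hu_pos x₀
  have hu₁ : 0 < u₁ := hu_pos x₁
  have hQ0 : 0 ≤ a₁*u₀^3 - b₁*u₀^4 - c₁*τ*u₀^2 - γ*τ*a₂*u₀ + γ*τ*b₂*u₀^2 + γ*c₂*τ^2 := by
    rw [← hfun_mul_sq (ne_of_gt hu₀)]
    exact mul_nonneg hhmax (sq_nonneg _)
  have hQ1 : a₁*u₁^3 - b₁*u₁^4 - c₁*τ*u₁^2 - γ*τ*a₂*u₁ + γ*τ*b₂*u₁^2 + γ*c₂*τ^2 ≤ 0 := by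
    rw [← hfun_mul_sq (ne_of_gt hu₁)]
    exact mul_nonpos_of_nonpos_of_nonneg hhmin (sq_nonneg _)
  -- u₀ ≤ M
  have hu₀M : u₀ ≤ M := by
    rcases le_or_gt u₀ 1 with h | h
    · linarith
    · have e6 : b₁*u₀ ≤ a₁ + K := by
        rw [hKdef]
        exact arith_max hb₁ hc₁ ha₂ hb₂ hc₂ hγ hτ hτT h hQ0
      have e7 : u₀ ≤ (a₁+K)/b₁ := (le_div_iff₀ hb₁).2 (by linarith)
      exact le_trans e7 (le_max_right _ _)
  -- upper bound on w
  have hwub : ∀ x ∈ Icc (0:ℝ) 1, w x ≤ δ*M := by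
    intro x hx
    have h1 : w x ≤ w x₀ := hmax hx
    have h3 : w x₀ ≤ δ*M := arith_wub hδ hγ hτ hu₀ hu₀M (hu_id x₀)
    linarith
  -- u₁ ≤ M₁
  have hid1 : δ * u₁^2 = w x₁ * u₁ + γ*τ := hu_id x₁
  have hw1ub : w x₁ ≤ δ*M := hwub x₁ hx₁
  have hu₁M₁ : u₁ ≤ M₁ := by
    rcases le_or_gt u₁ 1 with h | h
    · linarith
    · exact le_trans (arith_u1 hδ hγ hτ h hw1ub hτT hid1) (le_max_right _ _)
  -- γτ ≤ N u₁
  have hkey : γ*c₂*τ^2 ≤ B*u₁^2 + a₂*γ*τ*u₁ := by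
    rw [hBdef]
    exact arith_min ha₁ hb₁ hc₁ hb₂ hγ hτ hτT hu₁ hu₁M₁ hQ1
  have hγτN : γ*τ ≤ N*u₁ := by
    have hcN : γ*(B+a₂) ≤ N*c₂ := (div_le_iff₀ hc₂).1 (le_max_right _ _)
    exact arith_N hγ hc₂ ha₂ hB hτ hu₁ hN1 hcN hkey
  -- lower bound on w
  have hwlb : ∀ x ∈ Icc (0:ℝ) 1, -N ≤ w x := by
    intro x hx
    have h1 : w x₁ ≤ w x := hmin hx
    have h3 : -N ≤ w x₁ := arith_wlb hδ hγ hτ hu₁ hγτN hid1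
    linarith
  intro x hx
  rw [abs_le]
  constructor
  · exact le_trans (neg_le_neg (le_max_right (δ*M) N)) (hwlb x hx)
  · exact le_trans (hwub x hx) (le_max_left _ _)
end

section
/- For every ε > 0 there exists a constant C₁* > 0, depending only on ε, a₁, a₂, b₁, b₂, c₁, c₂, γ, δ, such that for every d ≥ ε and every solution (w, τ) of the one-dimensional limiting system with diffusion coefficient d, one has max_{x ∈ [0,1]} |w(x)| + max_{x ∈ [0,1]} |w'(x)| ≤ C₁*. -/
set_option maxHeartbeats 2000000

open Set

lemma Upos (γ δ w τ : ℝ) (hγ : 0 < γ) (hδ : 0 < δ) (hτ : 0 < τ) :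
    0 < Ufun γ δ w τ := by
  unfold Ufun
  have h1 : |w| < Real.sqrt (w ^ 2 + 4 * γ * δ * τ) := by
    rw [← Real.sqrt_sq_eq_abs]
    apply Real.sqrt_lt_sqrt (sq_nonneg w)
    nlinarith [mul_pos (mul_pos hγ hδ) hτ]
  have h2 := neg_abs_le w
  apply div_pos (by linarith) (by linarith)

lemma Uquad (γ δ w τ : ℝ) (hγ : 0 < γ) (hδ : 0 < δ) (hτ : 0 < τ) :
    δ * (Ufun γ δ w τ) ^ 2 = w * Ufun γ δ w τ + γ * τ := by
  have hD : (0:ℝ) ≤ w ^ 2 + 4 * γ * δ * τ := by nlinarith [mul_pos (mul_pos hγ hδ) hτ]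
  have hs : Real.sqrt (w ^ 2 + 4 * γ * δ * τ) ^ 2 = w ^ 2 + 4 * γ * δ * τ :=
    Real.sq_sqrt hD
  unfold Ufun
  field_simp
  rw [show w ^ 2 + δ * 4 * γ * τ = w ^ 2 + 4 * γ * δ * τ by ring]
  nlinarith [hs]

lemma Umono (γ δ τ U₁ U₂ w₁ w₂ : ℝ) (hγ : 0 < γ) (hδ : 0 < δ) (hτ : 0 < τ)
    (hU₁ : 0 < U₁) (hU₂ : 0 < U₂)
    (h₁ : δ * U₁ ^ 2 = w₁ * U₁ + γ * τ) (h₂ : δ * U₂ ^ 2 = w₂ * U₂ + γ * τ)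
    (hw : w₁ ≤ w₂) : U₁ ≤ U₂ := by
  by_contra hlt
  push_neg at hlt
  have key : δ * (U₁ + U₂) * (U₁ - U₂) ≤ w₂ * (U₁ - U₂) := by nlinarith
  have h3 : δ * (U₁ + U₂) ≤ w₂ :=
    (mul_le_mul_iff_of_pos_right (show (0:ℝ) < U₁ - U₂ by linarith)).mp key
  have h4 : w₂ * U₂ < (δ * U₂) * U₂ := by nlinarith [mul_pos hγ hτ]
  have h5 : w₂ < δ * U₂ := (mul_lt_mul_iff_of_pos_right hU₂).mp h4
  nlinarith [mul_pos hδ hU₁]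

lemma bound1 (b₁ P Q R U : ℝ) (hb : 0 < b₁) (hU : 0 < U)
    (hP : 0 ≤ P) (hQ : 0 ≤ Q) (hR : 0 ≤ R)
    (h : b₁ * U ^ 4 ≤ P * U ^ 3 + Q * U ^ 2 + R) :
    U ≤ 1 + (P + Q + R) / b₁ := by
  rcases le_or_gt U 1 with h1 | h1
  · have : 0 ≤ (P + Q + R) / b₁ := by positivity
    linarith
  · have hU3 : (0:ℝ) < U ^ 3 := by positivity
    have h2 : U ^ 2 ≤ U ^ 3 := by nlinarith
    have h3 : (1:ℝ) ≤ U ^ 3 := by nlinarith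
    have h4 : b₁ * U * U ^ 3 ≤ (P + Q + R) * U ^ 3 := by nlinarith
    have h5 : b₁ * U ≤ P + Q + R := le_of_mul_le_mul_right h4 hU3
    have h6 : U ≤ (P + Q + R) / b₁ := by
      rw [le_div_iff₀ hb]; linarith [h5]
    linarith

lemma bound2 (p q C τ U : ℝ) (hp : 0 < p) (hq : 0 ≤ q) (hC : 0 ≤ C)
    (hτ : 0 < τ) (hU : 0 < U) (h : p * τ ^ 2 ≤ C * U ^ 2 + q * τ * U) :
    τ ≤ (1 + (C + q) / p) * U := by
  have hcoef : (1:ℝ) ≤ 1 + (C + q) / p := by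
    have : 0 ≤ (C + q) / p := by positivity
    linarith
  rcases le_or_gt τ U with h1 | h1
  · calc τ ≤ U := h1
      _ = 1 * U := (one_mul U).symm
      _ ≤ (1 + (C + q) / p) * U := by
          apply mul_le_mul_of_nonneg_right hcoef hU.le
  · have h2 : C * U ^ 2 ≤ C * τ * U := by
      nlinarith [mul_le_mul_of_nonneg_right (mul_le_mul_of_nonneg_left h1.le hC) hU.le]
    have h3 : p * τ * τ ≤ (C * τ + q * τ) * U := by nlinarith
    have h4 : p * τ ≤ (C + q) * U := by
      have := le_of_mul_le_mul_right (by nlinarith : (p * τ) * τ ≤ ((C + q) * U) * τ) hτ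
      linarith
    have h5 : τ ≤ ((C + q) / p) * U := by
      rw [div_mul_eq_mul_div, le_div_iff₀ hp]
      nlinarith
    nlinarith

lemma hfun_mul (a₁ a₂ b₁ b₂ c₁ c₂ γ u τ : ℝ) (hu : u ≠ 0) :
    hfun a₁ a₂ b₁ b₂ c₁ c₂ γ u τ * u ^ 2 =
      a₁ * u ^ 3 - b₁ * u ^ 4 - c₁ * τ * u ^ 2 - γ * a₂ * τ * u
        + γ * b₂ * τ * u ^ 2 + γ * c₂ * τ ^ 2 := by
  unfold hfun; field_simp; ring

lemma hbound (a₁ a₂ b₁ b₂ c₁ c₂ γ : ℝ)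
    (ha₁ : 0 < a₁) (ha₂ : 0 < a₂) (hb₁ : 0 < b₁) (hb₂ : 0 < b₂)
    (hc₁ : 0 < c₁) (hc₂ : 0 < c₂) (hγ : 0 < γ)
    (u τ Um T K : ℝ) (hu : 0 < u) (hτ : 0 < τ) (huM : u ≤ Um) (hτT : τ ≤ T)
    (hK : γ * τ ≤ K * u) (hK0 : 0 ≤ K) :
    |hfun a₁ a₂ b₁ b₂ c₁ c₂ γ u τ| ≤
      a₁ * Um + b₁ * Um ^ 2 + c₁ * T + a₂ * K + b₂ * K * Um + c₂ * K ^ 2 / γ := by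
  have hu2 : (0:ℝ) < u ^ 2 := by positivity
  have hsq : u ^ 2 ≤ Um ^ 2 := by nlinarith
  have h1 : a₁ * u ^ 3 ≤ a₁ * Um * u ^ 2 := by
    nlinarith [mul_le_mul_of_nonneg_right (mul_le_mul_of_nonneg_left huM ha₁.le) (sq_nonneg u)]
  have h2 : b₁ * u ^ 4 ≤ b₁ * Um ^ 2 * u ^ 2 := by
    nlinarith [mul_le_mul_of_nonneg_right hsq (sq_nonneg u)]
  have h3 : c₁ * τ * u ^ 2 ≤ c₁ * T * u ^ 2 := by
    nlinarith [mul_le_mul_of_nonneg_right hτT (sq_nonneg u)]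
  have h4 : γ * a₂ * τ * u ≤ a₂ * K * u ^ 2 := by
    nlinarith [mul_le_mul_of_nonneg_right hK (mul_nonneg ha₂.le hu.le)]
  have h5 : γ * b₂ * τ * u ^ 2 ≤ b₂ * K * Um * u ^ 2 := by
    have e1 : γ * τ * u ^ 2 ≤ K * u * u ^ 2 :=
      mul_le_mul_of_nonneg_right hK (sq_nonneg u)
    have e2 : K * u * u ^ 2 ≤ K * Um * u ^ 2 := by nlinarith
    nlinarith
  have h6 : γ * c₂ * τ ^ 2 ≤ c₂ * K ^ 2 / γ * u ^ 2 := by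
    have e1 : (γ * τ) * (γ * τ) ≤ (K * u) * (K * u) :=
      mul_self_le_mul_self (mul_nonneg hγ.le hτ.le) hK
    rw [div_mul_eq_mul_div, le_div_iff₀ hγ]
    nlinarith [mul_le_mul_of_nonneg_left e1 hc₂.le]
  have m1 : 0 ≤ a₁ * u ^ 3 := by positivity
  have m2 : 0 ≤ b₁ * u ^ 4 := by positivity
  have m3 : 0 ≤ c₁ * τ * u ^ 2 := by positivity
  have m4 : 0 ≤ γ * a₂ * τ * u := by positivity
  have m5 : 0 ≤ γ * b₂ * τ * u ^ 2 := by positivity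
  have m6 : 0 ≤ γ * c₂ * τ ^ 2 := by positivity
  have key : |hfun a₁ a₂ b₁ b₂ c₁ c₂ γ u τ| * u ^ 2 ≤
      (a₁ * Um + b₁ * Um ^ 2 + c₁ * T + a₂ * K + b₂ * K * Um + c₂ * K ^ 2 / γ) * u ^ 2 := by
    have habs : |hfun a₁ a₂ b₁ b₂ c₁ c₂ γ u τ| * u ^ 2 = |hfun a₁ a₂ b₁ b₂ c₁ c₂ γ u τ * u ^ 2| := by
      rw [abs_mul, abs_of_pos hu2]
    rw [habs, hfun_mul _ _ _ _ _ _ _ _ _ hu.ne', abs_le]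
    constructor
    · linarith [h1, h2, h3, h4, h5, h6, m1, m2, m3, m4, m5, m6]
    · linarith [h1, h2, h3, h4, h5, h6, m1, m2, m3, m4, m5, m6]
  exact le_of_mul_le_mul_right key hu2

lemma maxpt (w w' w'' : ℝ → ℝ)
    (hw : ∀ x ∈ Icc (0:ℝ) 1, HasDerivWithinAt w (w' x) (Icc 0 1) x)
    (hw' : ∀ x ∈ Icc (0:ℝ) 1, HasDerivWithinAt w' (w'' x) (Icc 0 1) x)
    (hcont : ContinuousOn w'' (Icc 0 1))
    (hb0 : w' 0 = 0) (hb1 : w' 1 = 0)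
    (x₀ : ℝ) (hx₀ : x₀ ∈ Icc (0:ℝ) 1) (hmax : IsMaxOn w (Icc 0 1) x₀) :
    w'' x₀ ≤ 0 := by
  by_contra hpos
  push_neg at hpos
  have hcw : ContinuousWithinAt w'' (Icc 0 1) x₀ := hcont x₀ hx₀
  have hev : w'' ⁻¹' Ioi 0 ∈ nhdsWithin x₀ (Icc (0:ℝ) 1) := hcw (Ioi_mem_nhds hpos)
  obtain ⟨η, hη, hsub⟩ := Metric.mem_nhdsWithin_iff.mp hev
  have hball : ∀ z ∈ Icc (0:ℝ) 1, |z - x₀| < η → 0 < w'' z := by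
    intro z hz hdist
    have : z ∈ Metric.ball x₀ η ∩ Icc 0 1 := ⟨by simpa [Real.dist_eq] using hdist, hz⟩
    exact hsub this
  rcases lt_or_eq_of_le hx₀.2 with hlt | heq
  · -- x₀ < 1 : w increases to the right, contradiction
    have hd0 : w' x₀ = 0 := by
      rcases eq_or_lt_of_le hx₀.1 with h0 | h0
      · rw [← h0]; exact hb0
      · have hnn : Icc (0:ℝ) 1 ∈ nhds x₀ := Icc_mem_nhds h0 hlt
        exact (hmax.isLocalMax hnn).hasDerivAt_eq_zero ((hw x₀ hx₀).hasDerivAt hnn)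
    set b := min (x₀ + η/2) 1 with hbdef
    have hx₀b : x₀ < b := lt_min (by linarith) hlt
    have hble : b ≤ 1 := min_le_right _ _
    have hsub2 : Icc x₀ b ⊆ Icc 0 1 := Icc_subset_Icc hx₀.1 hble
    have hppos : ∀ z ∈ Icc x₀ b, 0 < w'' z := by
      intro z hz
      apply hball z (hsub2 hz)
      have h1 : z - x₀ ≤ b - x₀ := by linarith [hz.2]
      have h2 : b ≤ x₀ + η/2 := min_le_left _ _
      rw [abs_of_nonneg (by linarith [hz.1])]; linarith
    have hIoo : ∀ z ∈ Ioo x₀ b, z ∈ Ioo (0:ℝ) 1 :=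
      fun z hz => ⟨lt_of_le_of_lt hx₀.1 hz.1, lt_of_lt_of_le hz.2 hble⟩
    have hmono : StrictMonoOn w' (Icc x₀ b) := by
      apply strictMonoOn_of_deriv_pos (convex_Icc _ _)
        (fun z hz => ((hw' z (hsub2 hz)).continuousWithinAt).mono hsub2)
      intro z hz
      rw [interior_Icc] at hz
      have hz01 := hIoo z hz
      have hda : HasDerivAt w' (w'' z) z :=
        (hw' z (hsub2 (Ioo_subset_Icc_self hz))).hasDerivAt (Icc_mem_nhds hz01.1 hz01.2)
      rw [hda.deriv]
      exact hppos z (Ioo_subset_Icc_self hz)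
    have hw'pos : ∀ z ∈ Ioo x₀ b, 0 < w' z := by
      intro z hz
      have := hmono (left_mem_Icc.mpr hx₀b.le) (Ioo_subset_Icc_self hz) hz.1
      rw [hd0] at this; exact this
    have hmono2 : StrictMonoOn w (Icc x₀ b) := by
      apply strictMonoOn_of_deriv_pos (convex_Icc _ _)
        (fun z hz => ((hw z (hsub2 hz)).continuousWithinAt).mono hsub2)
      intro z hz
      rw [interior_Icc] at hz
      have hz01 := hIoo z hz
      have hda : HasDerivAt w (w' z) z :=
        (hw z (hsub2 (Ioo_subset_Icc_self hz))).hasDerivAt (Icc_mem_nhds hz01.1 hz01.2)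
      rw [hda.deriv]
      exact hw'pos z hz
    have hlt2 : w x₀ < w b :=
      hmono2 (left_mem_Icc.mpr hx₀b.le) (right_mem_Icc.mpr hx₀b.le) hx₀b
    exact absurd (hmax (hsub2 (right_mem_Icc.mpr hx₀b.le))) (not_le.mpr hlt2)
  · -- x₀ = 1 : w decreases from the left, contradiction
    subst heq
    set a := max (1 - η/2) 0 with hadef
    have hax : a < 1 := max_lt (by linarith) one_pos
    have ha0 : 0 ≤ a := le_max_right _ _
    have hsub2 : Icc a 1 ⊆ Icc (0:ℝ) 1 := Icc_subset_Icc ha0 le_rfl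
    have hppos : ∀ z ∈ Icc a 1, 0 < w'' z := by
      intro z hz
      apply hball z (hsub2 hz)
      have h2 : 1 - η/2 ≤ a := le_max_left _ _
      rw [abs_of_nonpos (by linarith [hz.2])]
      linarith [hz.1]
    have hIoo : ∀ z ∈ Ioo a 1, z ∈ Ioo (0:ℝ) 1 :=
      fun z hz => ⟨lt_of_le_of_lt ha0 hz.1, hz.2⟩
    have hmono : StrictMonoOn w' (Icc a 1) := by
      apply strictMonoOn_of_deriv_pos (convex_Icc _ _)
        (fun z hz => ((hw' z (hsub2 hz)).continuousWithinAt).mono hsub2)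
      intro z hz
      rw [interior_Icc] at hz
      have hz01 := hIoo z hz
      have hda : HasDerivAt w' (w'' z) z :=
        (hw' z (hsub2 (Ioo_subset_Icc_self hz))).hasDerivAt (Icc_mem_nhds hz01.1 hz01.2)
      rw [hda.deriv]
      exact hppos z (Ioo_subset_Icc_self hz)
    have hw'neg : ∀ z ∈ Ioo a 1, w' z < 0 := by
      intro z hz
      have := hmono (Ioo_subset_Icc_self hz) (right_mem_Icc.mpr hax.le) hz.2
      rw [hb1] at this; exact this
    have hanti : StrictAntiOn w (Icc a 1) := by
      apply strictAntiOn_of_deriv_neg (convex_Icc _ _)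
        (fun z hz => ((hw z (hsub2 hz)).continuousWithinAt).mono hsub2)
      intro z hz
      rw [interior_Icc] at hz
      have hz01 := hIoo z hz
      have hda : HasDerivAt w (w' z) z :=
        (hw z (hsub2 (Ioo_subset_Icc_self hz))).hasDerivAt (Icc_mem_nhds hz01.1 hz01.2)
      rw [hda.deriv]
      exact hw'neg z hz
    have hlt2 : w 1 < w a :=
      hanti (left_mem_Icc.mpr hax.le) (right_mem_Icc.mpr hax.le) hax
    exact absurd (hmax (hsub2 (left_mem_Icc.mpr hax.le))) (not_le.mpr hlt2)

/-- `C¹` a priori bound (Corollary 4.2): for every `ε > 0` there is `C₁* > 0`,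
depending only on `ε` and the data, such that every solution `(w, τ)` of the
one-dimensional limiting system with `d ≥ ε` satisfies
`max |w| + max |w'| ≤ C₁*`. -/
theorem stmt_5 (a₁ a₂ b₁ b₂ c₁ c₂ γ δ : ℝ)
    (ha₁ : 0 < a₁) (ha₂ : 0 < a₂) (hb₁ : 0 < b₁) (hb₂ : 0 < b₂)
    (hc₁ : 0 < c₁) (hc₂ : 0 < c₂) (hγ : 0 < γ) (hδ : 0 < δ) :
    ∀ ε > 0, ∃ C₁ > 0, ∀ d : ℝ, ε ≤ d → ∀ (τ : ℝ) (w w' w'' : ℝ → ℝ), 0 < τ →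
      (∀ x ∈ Icc (0:ℝ) 1, HasDerivWithinAt w (w' x) (Icc 0 1) x) →
      (∀ x ∈ Icc (0:ℝ) 1, HasDerivWithinAt w' (w'' x) (Icc 0 1) x) →
      ContinuousOn w'' (Icc 0 1) →
      (∀ x ∈ Icc (0:ℝ) 1,
        d * w'' x + hfun a₁ a₂ b₁ b₂ c₁ c₂ γ (Ufun γ δ (w x) τ) τ = 0) →
      w' 0 = 0 → w' 1 = 0 →
      (∫ x in (0:ℝ)..1,
        (Ufun γ δ (w x) τ * (a₁ - b₁ * Ufun γ δ (w x) τ) - c₁ * τ)) = 0 →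
      ∀ x ∈ Icc (0:ℝ) 1, ∀ y ∈ Icc (0:ℝ) 1, |w x| + |w' y| ≤ C₁ := by
  intro ε hε
  set T := a₁ ^ 2 / (4 * b₁ * c₁) with hTd
  have hT : 0 < T := by rw [hTd]; positivity
  set Um := 1 + (a₁ + γ * T * b₂ + γ * c₂ * T ^ 2) / b₁ with hUmd
  have hUm : 0 < Um := by rw [hUmd]; positivity
  set R2 := 1 + (b₁ * Um ^ 2 + c₁ * T + γ * a₂) / (γ * c₂) with hR2d
  have hR2 : 0 < R2 := by rw [hR2d]; positivity
  set Cw := δ * Um + γ * R2 with hCwd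
  have hCw : 0 < Cw := by rw [hCwd]; positivity
  set K := δ * Um + Cw with hKd
  have hK : 0 < K := by rw [hKd]; positivity
  set H := a₁ * Um + b₁ * Um ^ 2 + c₁ * T + a₂ * K + b₂ * K * Um + c₂ * K ^ 2 / γ with hHd
  have hH : 0 < H := by rw [hHd]; positivity
  refine ⟨Cw + H / ε + 1, by positivity, ?_⟩
  intro d hd τ w w' w'' hτ hw hw' hw''c hode hbc0 hbc1 hintg x hx y hy
  have hd0 : 0 < d := lt_of_lt_of_le hε hd
  have hUpos : ∀ z : ℝ, 0 < Ufun γ δ (w z) τ := fun z => Upos γ δ (w z) τ hγ hδ hτ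
  have hquad : ∀ z : ℝ, δ * (Ufun γ δ (w z) τ) ^ 2 = w z * Ufun γ δ (w z) τ + γ * τ :=
    fun z => Uquad γ δ (w z) τ hγ hδ hτ
  -- continuity
  have hwc : ContinuousOn w (Icc 0 1) := fun z hz => (hw z hz).continuousWithinAt
  have hUcont : Continuous (fun v : ℝ => Ufun γ δ v τ) := by
    unfold Ufun
    exact ((Real.continuous_sqrt.comp
      ((continuous_pow 2).add continuous_const)).add continuous_id).div_const _
  have hUc : ContinuousOn (fun z => Ufun γ δ (w z) τ) (Icc 0 1) :=
    hUcont.comp_continuousOn hwc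
  -- step 1 : τ ≤ T from the integral constraint
  have hτT : τ ≤ T := by
    have hf : ContinuousOn
        (fun z => Ufun γ δ (w z) τ * (a₁ - b₁ * Ufun γ δ (w z) τ) - c₁ * τ) (Icc 0 1) :=
      (hUc.mul (continuousOn_const.sub (continuousOn_const.mul hUc))).sub continuousOn_const
    have hInt : IntervalIntegrable
        (fun z => Ufun γ δ (w z) τ * (a₁ - b₁ * Ufun γ δ (w z) τ) - c₁ * τ)
        MeasureTheory.volume 0 1 := hf.intervalIntegrable_of_Icc zero_le_one
    have hgInt : IntervalIntegrable (fun _ : ℝ => a₁ ^ 2 / (4 * b₁) - c₁ * τ)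
        MeasureTheory.volume 0 1 := intervalIntegrable_const
    have hmono := intervalIntegral.integral_mono_on zero_le_one hInt hgInt
      (fun z hz => by
        have h1 : Ufun γ δ (w z) τ * (a₁ - b₁ * Ufun γ δ (w z) τ) ≤ a₁ ^ 2 / (4 * b₁) := by
          rw [le_div_iff₀ (by positivity)]
          nlinarith [sq_nonneg (2 * b₁ * Ufun γ δ (w z) τ - a₁)]
        linarith)
    rw [hintg] at hmono
    simp only [intervalIntegral.integral_const, smul_eq_mul, sub_zero, one_mul] at hmono
    have h2 : c₁ * τ ≤ a₁ ^ 2 / (4 * b₁) := by linarith [hmono]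
    rw [le_div_iff₀ (by positivity)] at h2
    rw [hTd, le_div_iff₀ (by positivity)]
    linarith [h2]
  -- max and min points
  obtain ⟨xM, hxM, hmaxM⟩ :=
    isCompact_Icc.exists_isMaxOn (nonempty_Icc.mpr zero_le_one) hwc
  obtain ⟨xm, hxm, hminm⟩ :=
    isCompact_Icc.exists_isMinOn (nonempty_Icc.mpr zero_le_one) hwc
  -- second derivative signs at extrema
  have hwM : w'' xM ≤ 0 := maxpt w w' w'' hw hw' hw''c hbc0 hbc1 xM hxM hmaxM
  have hwm : 0 ≤ w'' xm := by
    have hneg := maxpt (fun z => -w z) (fun z => -w' z) (fun z => -w'' z)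
      (fun z hz => (hw z hz).neg) (fun z hz => (hw' z hz).neg) (hw''c.neg)
      (by simp [hbc0]) (by simp [hbc1]) xm hxm
      (isMaxOn_iff.mpr (fun z hz => neg_le_neg (isMinOn_iff.mp hminm z hz)))
    simpa using hneg
  have hhM : 0 ≤ hfun a₁ a₂ b₁ b₂ c₁ c₂ γ (Ufun γ δ (w xM) τ) τ := by
    have heq := hode xM hxM
    linarith [mul_nonneg hd0.le (neg_nonneg.mpr hwM)]
  have hhm : hfun a₁ a₂ b₁ b₂ c₁ c₂ γ (Ufun γ δ (w xm) τ) τ ≤ 0 := by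
    have heq := hode xm hxm
    linarith [mul_nonneg hd0.le hwm]
  -- monotonicity of U in w
  have hUle : ∀ z ∈ Icc (0:ℝ) 1, Ufun γ δ (w z) τ ≤ Ufun γ δ (w xM) τ := fun z hz =>
    Umono γ δ τ _ _ (w z) (w xM) hγ hδ hτ (hUpos z) (hUpos xM)
      (hquad z) (hquad xM) (hmaxM hz)
  -- bound at the max point
  have hUM : Ufun γ δ (w xM) τ ≤ Um := by
    have hP := hfun_mul a₁ a₂ b₁ b₂ c₁ c₂ γ (Ufun γ δ (w xM) τ) τ (hUpos xM).ne'
    have h0 : 0 ≤ hfun a₁ a₂ b₁ b₂ c₁ c₂ γ (Ufun γ δ (w xM) τ) τ * (Ufun γ δ (w xM) τ) ^ 2 :=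
      mul_nonneg hhM (sq_nonneg _)
    rw [hP] at h0
    rw [hUmd]
    apply bound1 b₁ a₁ (γ * T * b₂) (γ * c₂ * T ^ 2) _ hb₁ (hUpos xM)
      ha₁.le (by positivity) (by positivity)
    have f1 : γ * b₂ * τ * Ufun γ δ (w xM) τ ^ 2 ≤ γ * T * b₂ * Ufun γ δ (w xM) τ ^ 2 := by
      have := mul_le_mul_of_nonneg_left
        (mul_le_mul_of_nonneg_right hτT (sq_nonneg (Ufun γ δ (w xM) τ)))
        (mul_pos hγ hb₂).le
      linarith [this]
    have f2 : γ * c₂ * τ ^ 2 ≤ γ * c₂ * T ^ 2 := by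
      have e : τ ^ 2 ≤ T ^ 2 := by nlinarith [mul_self_le_mul_self hτ.le hτT]
      exact mul_le_mul_of_nonneg_left e (mul_pos hγ hc₂).le
    have f3 : 0 ≤ c₁ * τ * Ufun γ δ (w xM) τ ^ 2 := by positivity
    have f4 : 0 ≤ γ * a₂ * τ * Ufun γ δ (w xM) τ :=
      mul_nonneg (by positivity) (hUpos xM).le
    linarith [h0, f1, f2, f3, f4]
  have hUleUm : ∀ z ∈ Icc (0:ℝ) 1, Ufun γ δ (w z) τ ≤ Um :=
    fun z hz => (hUle z hz).trans hUM
  -- bound at the min point : τ ≤ R2 * U(xm)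
  have hτU : τ ≤ R2 * Ufun γ δ (w xm) τ := by
    have hP := hfun_mul a₁ a₂ b₁ b₂ c₁ c₂ γ (Ufun γ δ (w xm) τ) τ (hUpos xm).ne'
    have h0 : hfun a₁ a₂ b₁ b₂ c₁ c₂ γ (Ufun γ δ (w xm) τ) τ * (Ufun γ δ (w xm) τ) ^ 2 ≤ 0 :=
      mul_nonpos_of_nonpos_of_nonneg hhm (sq_nonneg _)
    rw [hP] at h0
    rw [hR2d]
    apply bound2 (γ * c₂) (γ * a₂) (b₁ * Um ^ 2 + c₁ * T) τ _ (mul_pos hγ hc₂)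
      (mul_pos hγ ha₂).le
      (by positivity : (0:ℝ) ≤ b₁ * Um ^ 2 + c₁ * T) hτ (hUpos xm)
    have hu := hUpos xm
    have huM := hUleUm xm hxm
    have e1 : b₁ * (Ufun γ δ (w xm) τ) ^ 4 ≤ b₁ * Um ^ 2 * (Ufun γ δ (w xm) τ) ^ 2 := by
      have := mul_le_mul_of_nonneg_left (mul_le_mul_of_nonneg_right
        (mul_self_le_mul_self hu.le huM) (sq_nonneg (Ufun γ δ (w xm) τ))) hb₁.le
      linarith [this]
    have e2 : c₁ * τ * (Ufun γ δ (w xm) τ) ^ 2 ≤ c₁ * T * (Ufun γ δ (w xm) τ) ^ 2 := by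
      have := mul_le_mul_of_nonneg_left (mul_le_mul_of_nonneg_right hτT
        (sq_nonneg (Ufun γ δ (w xm) τ))) hc₁.le
      linarith [this]
    have e3 : 0 ≤ a₁ * (Ufun γ δ (w xm) τ) ^ 3 :=
      mul_nonneg ha₁.le (pow_nonneg (hUpos xm).le 3)
    have e4 : 0 ≤ γ * b₂ * τ * (Ufun γ δ (w xm) τ) ^ 2 := by positivity
    linarith [h0, e1, e2, e3, e4]
  -- pointwise bounds on w
  have hwub : ∀ z ∈ Icc (0:ℝ) 1, w z ≤ δ * Um := by
    intro z hz
    have h1 : w xM * Ufun γ δ (w xM) τ ≤ (δ * Um) * Ufun γ δ (w xM) τ := by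
      have := hquad xM
      linarith [mul_pos hγ hτ,
        mul_le_mul_of_nonneg_right (mul_le_mul_of_nonneg_left hUM hδ.le) (hUpos xM).le]
    have h2 : w xM ≤ δ * Um := (mul_le_mul_iff_of_pos_right (hUpos xM)).mp h1
    have h3 : w z ≤ w xM := hmaxM hz
    linarith [h3, h2]
  have hwlb : ∀ z ∈ Icc (0:ℝ) 1, -(γ * R2) ≤ w z := by
    intro z hz
    have h1 : (-(γ * R2)) * Ufun γ δ (w xm) τ ≤ w xm * Ufun γ δ (w xm) τ := by
      have := hquad xm
      have hγτ : γ * τ ≤ γ * (R2 * Ufun γ δ (w xm) τ) :=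
        mul_le_mul_of_nonneg_left hτU hγ.le
      linarith [hγτ, mul_nonneg hδ.le (sq_nonneg (Ufun γ δ (w xm) τ))]
    have h2 : -(γ * R2) ≤ w xm := (mul_le_mul_iff_of_pos_right (hUpos xm)).mp h1
    have h3 : w xm ≤ w z := hminm hz
    linarith [h3, h2]
  have hwabs : ∀ z ∈ Icc (0:ℝ) 1, |w z| ≤ Cw := by
    intro z hz
    rw [abs_le, hCwd]
    constructor
    · have := hwlb z hz
      linarith [mul_pos hδ hUm]
    · have := hwub z hz
      linarith [mul_pos hγ hR2]
  -- bound γ τ ≤ K * U z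
  have hKb : ∀ z ∈ Icc (0:ℝ) 1, γ * τ ≤ K * Ufun γ δ (w z) τ := by
    intro z hz
    have h1 : δ * Ufun γ δ (w z) τ - w z ≤ K := by
      have e1 : δ * Ufun γ δ (w z) τ ≤ δ * Um :=
        mul_le_mul_of_nonneg_left (hUleUm z hz) hδ.le
      have e2 : -(w z) ≤ Cw := by
        have := (abs_le.mp (hwabs z hz)).1
        linarith
      rw [hKd]; linarith
    have := hquad z
    linarith [mul_le_mul_of_nonneg_right h1 (hUpos z).le]
  -- bound on hfun everywhere
  have hHb : ∀ z ∈ Icc (0:ℝ) 1, |hfun a₁ a₂ b₁ b₂ c₁ c₂ γ (Ufun γ δ (w z) τ) τ| ≤ H := by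
    intro z hz
    rw [hHd]
    exact hbound a₁ a₂ b₁ b₂ c₁ c₂ γ ha₁ ha₂ hb₁ hb₂ hc₁ hc₂ hγ
      _ τ Um T K (hUpos z) hτ (hUleUm z hz) hτT (hKb z hz) hK.le
  -- bound on w'
  have hw'b : ∀ z ∈ Icc (0:ℝ) 1, |w' z| ≤ H / ε := by
    intro z hz
    rcases eq_or_lt_of_le hz.1 with h0 | h0
    · rw [← h0, hbc0, abs_zero]
      positivity
    · have hsubz : Icc (0:ℝ) z ⊆ Icc (0:ℝ) 1 := Icc_subset_Icc le_rfl hz.2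
      obtain ⟨c, hc, hsl⟩ := exists_hasDerivAt_eq_slope w' w'' h0
        (fun t ht => ((hw' t (hsubz ht)).continuousWithinAt).mono hsubz)
        (fun t ht => (hw' t (hsubz (Ioo_subset_Icc_self ht))).hasDerivAt
          (Icc_mem_nhds ht.1 (lt_of_lt_of_le ht.2 hz.2)))
      have hcI : c ∈ Icc (0:ℝ) 1 := ⟨hc.1.le, le_trans hc.2.le hz.2⟩
      have hwz : w' z = w'' c * z := by
        rw [hsl, hbc0]
        field_simp
        ring
      have hode_c := hode c hcI
      have hw''c : |w'' c| ≤ H / d := by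
        have heq : w'' c = -(hfun a₁ a₂ b₁ b₂ c₁ c₂ γ (Ufun γ δ (w c) τ) τ) / d := by
          field_simp
          linarith [hode_c]
        rw [heq, abs_div, abs_neg, abs_of_pos hd0]
        gcongr
        exact hHb c hcI
      calc |w' z| = |w'' c| * |z| := by rw [hwz, abs_mul]
        _ ≤ |w'' c| * 1 := by
            apply mul_le_mul_of_nonneg_left _ (abs_nonneg _)
            rw [abs_le]; exact ⟨by linarith [hz.1], hz.2⟩
        _ = |w'' c| := mul_one _
        _ ≤ H / d := hw''c
        _ ≤ H / ε := by gcongr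
  -- conclusion
  have := hwabs x hx
  have := hw'b y hy
  linarith
end

section
/- There exists τ̂ > 0 such that for every τ ∈ (0, τ̂) there exist real numbers 0 < z₁ < z₂ < z₃ with the property that h(u, τ) > 0 for all u ∈ (0, z₁) ∪ (z₂, z₃) and h(u, τ) < 0 for all u ∈ (z₁, z₂) ∪ (z₃, ∞); in particular h(z₁, τ) = h(z₂, τ) = h(z₃, τ) = 0 and z₁, z₂, z₃ are the only zeros of h(·, τ) on (0, ∞). -/
open Set

/-- quadratic vanishing at three distinct points is zero -/
lemma quad3 {A B C z₁ z₂ z₃ : ℝ} (h12 : z₁ < z₂) (h23 : z₂ < z₃)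
    (e1 : A*z₁^2 + B*z₁ + C = 0) (e2 : A*z₂^2 + B*z₂ + C = 0)
    (e3 : A*z₃^2 + B*z₃ + C = 0) : A = 0 ∧ B = 0 ∧ C = 0 := by
  have hA : A = 0 := by
    have h : A * ((z₂ - z₁) * (z₃ - z₂) * (z₃ - z₁)) = 0 := by
      linear_combination (z₃ - z₂)*e1 + (z₁ - z₃)*e2 + (z₂ - z₁)*e3
    have hpos : (0:ℝ) < (z₂ - z₁) * (z₃ - z₂) * (z₃ - z₁) := by
      have h13 : z₁ < z₃ := lt_trans h12 h23
      exact mul_pos (mul_pos (sub_pos.mpr h12) (sub_pos.mpr h23)) (sub_pos.mpr h13)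
    rcases mul_eq_zero.mp h with h' | h'
    · exact h'
    · exact absurd h' (ne_of_gt hpos)
  subst hA
  have hB : B = 0 := by
    have h : B * (z₂ - z₁) = 0 := by linear_combination e2 - e1
    rcases mul_eq_zero.mp h with h' | h'
    · exact h'
    · exact absurd h' (by intro hc; linarith [sub_pos.mpr h12])
  subst hB
  refine ⟨rfl, rfl, by linarith [e1]⟩

noncomputable def Pfun (a₁ b₁ b₂ c₁ c₂ a₂ γ τ : ℝ) : ℝ → ℝ :=
  fun u => γ*c₂*τ^2 - γ*a₂*τ*u + (γ*b₂-c₁)*τ*u^2 + a₁*u^3 - b₁*u^4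

lemma Pfun_cont (a₁ b₁ b₂ c₁ c₂ a₂ γ τ : ℝ) : Continuous (Pfun a₁ b₁ b₂ c₁ c₂ a₂ γ τ) := by
  unfold Pfun; fun_prop

lemma hfun_eq (a₁ a₂ b₁ b₂ c₁ c₂ γ τ u : ℝ) (hu : 0 < u) :
    hfun a₁ a₂ b₁ b₂ c₁ c₂ γ u τ = Pfun a₁ b₁ b₂ c₁ c₂ a₂ γ τ u / u^2 := by
  unfold hfun Pfun
  field_simp
  ring


/-- Existence part of Lemma 6.1: for all sufficiently small `τ > 0`, the function
`h(·, τ)` has exactly three positive zeros `z₁ < z₂ < z₃`, is positive on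
`(0,z₁) ∪ (z₂,z₃)` and negative on `(z₁,z₂) ∪ (z₃,∞)`. -/
theorem stmt_8 (a₁ a₂ b₁ b₂ c₁ c₂ γ δ : ℝ)
    (ha₁ : 0 < a₁) (ha₂ : 0 < a₂) (hb₁ : 0 < b₁) (hb₂ : 0 < b₂)
    (hc₁ : 0 < c₁) (hc₂ : 0 < c₂) (hγ : 0 < γ) (hδ : 0 < δ) :
    ∃ τhat > 0, ∀ τ : ℝ, τ ∈ Ioo 0 τhat →
      ∃ z₁ z₂ z₃ : ℝ, 0 < z₁ ∧ z₁ < z₂ ∧ z₂ < z₃ ∧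
        (∀ u : ℝ, u ∈ Ioo 0 z₁ ∪ Ioo z₂ z₃ → 0 < hfun a₁ a₂ b₁ b₂ c₁ c₂ γ u τ) ∧
        (∀ u : ℝ, u ∈ Ioo z₁ z₂ ∪ Ioi z₃ → hfun a₁ a₂ b₁ b₂ c₁ c₂ γ u τ < 0) ∧
        hfun a₁ a₂ b₁ b₂ c₁ c₂ γ z₁ τ = 0 ∧
        hfun a₁ a₂ b₁ b₂ c₁ c₂ γ z₂ τ = 0 ∧
        hfun a₁ a₂ b₁ b₂ c₁ c₂ γ z₃ τ = 0 ∧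
        (∀ u : ℝ, 0 < u → hfun a₁ a₂ b₁ b₂ c₁ c₂ γ u τ = 0 →
          u = z₁ ∨ u = z₂ ∨ u = z₃) := by
  -- sample points
  set q : ℝ := 2*c₂/a₂ with hq_def
  clear_value q
  have hq : 0 < q := by rw [hq_def]; positivity
  set p₂ : ℝ := a₁/(2*b₁) with hp₂_def
  clear_value p₂
  have hp₂ : 0 < p₂ := by rw [hp₂_def]; positivity
  have h2b : 2*b₁*p₂ = a₁ := by rw [hp₂_def]; field_simp
  set M : ℝ := max 1 ((a₁+γ*b₂+γ*c₂+1)/b₁) with hM_def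
  clear_value M
  have hM1 : (1:ℝ) ≤ M := by rw [hM_def]; exact le_max_left _ _
  have hbM : a₁+γ*b₂+γ*c₂+1 ≤ b₁*M := by
    have : (a₁+γ*b₂+γ*c₂+1)/b₁ ≤ M := by rw [hM_def]; exact le_max_right _ _
    rw [div_le_iff₀ hb₁] at this
    linarith [this]
  set p₃ : ℝ := p₂ + M with hp₃_def
  clear_value p₃
  have hp₂₃ : p₂ < p₃ := by rw [hp₃_def]; linarith
  have hp₃1 : (1:ℝ) ≤ p₃ := by rw [hp₃_def]; linarith
  have hbp₃ : a₁+γ*b₂+γ*c₂+1 ≤ b₁*p₃ := by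
    rw [hp₃_def]; linarith [hbM, mul_pos hb₁ hp₂]
  -- thresholds
  set T₁ : ℝ := γ*c₂ / (γ*b₂*q^2 + a₁*q^3 + 1) with hT₁_def
  clear_value T₁
  set T₂ : ℝ := a₁ / (2*b₁*q + 1) with hT₂_def
  clear_value T₂
  set T₃ : ℝ := (a₁*p₂^3/2) / (c₁*p₂^2 + γ*a₂*p₂ + 1) with hT₃_def
  clear_value T₃
  have hT₁ : T₁ * (γ*b₂*q^2 + a₁*q^3 + 1) = γ*c₂ := by
    rw [hT₁_def]; field_simp
  have hT₁pos : 0 < T₁ := by rw [hT₁_def]; positivity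
  have hT₂ : T₂ * (2*b₁*q + 1) = a₁ := by rw [hT₂_def]; field_simp
  have hT₂pos : 0 < T₂ := by rw [hT₂_def]; positivity
  have hT₃ : T₃ * (c₁*p₂^2 + γ*a₂*p₂ + 1) = a₁*p₂^3/2 := by
    rw [hT₃_def]; field_simp
  have hT₃pos : 0 < T₃ := by rw [hT₃_def]; positivity
  refine ⟨min 1 (min T₁ (min T₂ T₃)), lt_min one_pos (lt_min hT₁pos (lt_min hT₂pos hT₃pos)), ?_⟩
  rintro τ ⟨hτ0, hτu⟩
  have hτ1 : τ < 1 := lt_of_lt_of_le hτu (min_le_left _ _)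
  have hτT₁ : τ < T₁ := lt_of_lt_of_le hτu ((min_le_right _ _).trans (min_le_left _ _))
  have hτT₂ : τ < T₂ :=
    lt_of_lt_of_le hτu ((min_le_right _ _).trans ((min_le_right _ _).trans (min_le_left _ _)))
  have hτT₃ : τ < T₃ :=
    lt_of_lt_of_le hτu ((min_le_right _ _).trans ((min_le_right _ _).trans (min_le_right _ _)))
  set P : ℝ → ℝ := Pfun a₁ b₁ b₂ c₁ c₂ a₂ γ τ with hP_def
  clear_value P
  have hPdef : ∀ u, P u = γ*c₂*τ^2 - γ*a₂*τ*u + (γ*b₂-c₁)*τ*u^2 + a₁*u^3 - b₁*u^4 := by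
    intro u; rw [hP_def]; rfl
  have hPc : Continuous P := by rw [hP_def]; exact Pfun_cont _ _ _ _ _ _ _ _
  have ha₂q : a₂ * q = 2*c₂ := by rw [hq_def]; field_simp
  set p₁ : ℝ := q*τ with hp₁_def
  clear_value p₁
  have hp₁pos : 0 < p₁ := by rw [hp₁_def]; positivity
  have hp₁₂ : p₁ < p₂ := by
    have key : τ * (2*b₁*q + 1) < a₁ := by
      calc τ * (2*b₁*q + 1) < T₂ * (2*b₁*q + 1) := by
            apply mul_lt_mul_of_pos_right hτT₂; positivity
        _ = a₁ := hT₂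
    have h2 : 2*b₁*(q*τ) < 2*b₁*p₂ := by linarith [key, hτ0, h2b]
    rw [hp₁_def]
    exact lt_of_mul_lt_mul_left h2 (by positivity)
  -- sign at sample points
  have hP0 : 0 < P 0 := by rw [hPdef]; ring_nf; positivity
  have hPp₁ : P p₁ < 0 := by
    have key : (γ*b₂*q^2 + a₁*q^3 + 1) * τ < γ*c₂ := by
      calc (γ*b₂*q^2 + a₁*q^3 + 1) * τ < (γ*b₂*q^2 + a₁*q^3 + 1) * T₁ := by
            apply mul_lt_mul_of_pos_left hτT₁; positivity
        _ = γ*c₂ := by linarith [hT₁]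
    have key2 : (γ*b₂*q^2 + a₁*q^3 + 1) * τ * τ^2 < γ*c₂ * τ^2 :=
      mul_lt_mul_of_pos_right key (by positivity)
    have h2c : γ*(a₂*q)*τ^2 = γ*(2*c₂)*τ^2 := by rw [ha₂q]
    rw [hPdef, hp₁_def]
    linarith [key2, h2c, mul_pos (mul_pos hc₁ (pow_pos hq 2)) (pow_pos hτ0 3),
      mul_pos (mul_pos hb₁ (pow_pos hq 4)) (pow_pos hτ0 4), pow_pos hτ0 3]
  have hPp₂ : 0 < P p₂ := by
    have key : (c₁*p₂^2 + γ*a₂*p₂ + 1) * τ < a₁*p₂^3/2 := by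
      calc (c₁*p₂^2 + γ*a₂*p₂ + 1) * τ < (c₁*p₂^2 + γ*a₂*p₂ + 1) * T₃ := by
            apply mul_lt_mul_of_pos_left hτT₃; positivity
        _ = a₁*p₂^3/2 := by linarith [hT₃]
    have hb₁4 : b₁*p₂^4 = (a₁*p₂^3)/2 := by linear_combination (p₂^3/2) * h2b
    rw [hPdef]
    linarith [key, hb₁4, mul_pos (mul_pos hγ hb₂) (mul_pos hτ0 (pow_pos hp₂ 2)),
      mul_pos (mul_pos hγ hc₂) (pow_pos hτ0 2), hτ0]
  have hPp₃ : P p₃ < 0 := by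
    have hp₃0 : 0 < p₃ := by linarith
    have hτ2 : τ^2 ≤ 1 := by
      rw [sq]
      simpa using mul_le_mul hτ1.le hτ1.le hτ0.le zero_le_one
    have e1 : γ*c₂*τ^2 ≤ γ*c₂ := by
      have := mul_le_mul_of_nonneg_left hτ2 (by positivity : (0:ℝ) ≤ γ*c₂)
      linarith
    have e2 : γ*b₂*τ*p₃^2 ≤ γ*b₂*p₃^2 := by
      have h1 : γ*b₂*τ ≤ γ*b₂ := by
        have := mul_le_mul_of_nonneg_left hτ1.le (by positivity : (0:ℝ) ≤ γ*b₂)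
        linarith
      have := mul_le_mul_of_nonneg_right h1 (sq_nonneg p₃)
      linarith
    have e3 : a₁*p₃^3 - b₁*p₃^4 ≤ -((γ*b₂+γ*c₂+1)*p₃^3) := by
      have h1 : a₁ - b₁*p₃ ≤ -(γ*b₂+γ*c₂+1) := by linarith
      have := mul_le_mul_of_nonneg_right h1 (by positivity : (0:ℝ) ≤ p₃^3)
      linarith [this]
    have e6 : (1:ℝ) ≤ p₃^3 := one_le_pow₀ hp₃1
    have ep : p₃^2 ≤ p₃^3 := by
      calc p₃^2 = p₃^2 * 1 := by ring
        _ ≤ p₃^2 * p₃ := by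
            apply mul_le_mul_of_nonneg_left (by linarith) (sq_nonneg p₃)
        _ = p₃^3 := by ring
    have e4 : γ*b₂*p₃^2 ≤ γ*b₂*p₃^3 := by
      have := mul_le_mul_of_nonneg_left ep (by positivity : (0:ℝ) ≤ γ*b₂)
      linarith
    have e5 : γ*c₂ ≤ γ*c₂*p₃^3 := by
      have := mul_le_mul_of_nonneg_left e6 (by positivity : (0:ℝ) ≤ γ*c₂)
      linarith
    have e7 : 0 ≤ γ*a₂*τ*p₃ := by positivity
    have e8 : 0 ≤ c₁*τ*p₃^2 := by positivity
    rw [hPdef]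
    linarith [e1, e2, e3, e4, e5, e6, e7, e8]
  -- three roots by IVT
  obtain ⟨z₁, hz₁mem, hz₁⟩ : ∃ z ∈ Ioo (0:ℝ) p₁, P z = 0 := by
    have h := intermediate_value_Ioo' (le_of_lt hp₁pos) hPc.continuousOn
    obtain ⟨z, hz, hz0⟩ := h ⟨hPp₁, hP0⟩
    exact ⟨z, hz, hz0⟩
  obtain ⟨z₂, hz₂mem, hz₂⟩ : ∃ z ∈ Ioo p₁ p₂, P z = 0 := by
    have h := intermediate_value_Ioo (le_of_lt hp₁₂) hPc.continuousOn
    obtain ⟨z, hz, hz0⟩ := h ⟨hPp₁, hPp₂⟩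
    exact ⟨z, hz, hz0⟩
  obtain ⟨z₃, hz₃mem, hz₃⟩ : ∃ z ∈ Ioo p₂ p₃, P z = 0 := by
    have h := intermediate_value_Ioo' (le_of_lt hp₂₃) hPc.continuousOn
    obtain ⟨z, hz, hz0⟩ := h ⟨hPp₃, hPp₂⟩
    exact ⟨z, hz, hz0⟩
  obtain ⟨hz₁0, hz₁p₁⟩ := hz₁mem
  obtain ⟨hz₂p₁, hz₂p₂⟩ := hz₂mem
  obtain ⟨hz₃p₂, hz₃p₃⟩ := hz₃mem
  have h12 : z₁ < z₂ := lt_trans hz₁p₁ hz₂p₁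
  have h23 : z₂ < z₃ := lt_trans hz₂p₂ hz₃p₂
  have hz₂0 : 0 < z₂ := lt_trans hz₁0 h12
  have hz₃0 : 0 < z₃ := lt_trans hz₂0 h23
  -- factorization
  set d : ℝ := a₁ - b₁*(z₁+z₂+z₃) with hd_def
  clear_value d
  set A : ℝ := (γ*b₂-c₁)*τ + (z₁+z₂+z₃)*d + b₁*(z₁*z₂+z₁*z₃+z₂*z₃) with hA_def
  clear_value A
  set B : ℝ := -(γ*a₂*τ) - ((z₁*z₂+z₁*z₃+z₂*z₃)*d + b₁*(z₁*z₂*z₃)) with hB_def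
  clear_value B
  set C : ℝ := γ*c₂*τ^2 + z₁*z₂*z₃*d with hC_def
  clear_value C
  have hid : ∀ u, P u = (u-z₁)*(u-z₂)*(u-z₃)*(d-b₁*u) + (A*u^2+B*u+C) := by
    intro u
    rw [hPdef, hA_def, hB_def, hC_def, hd_def]
    ring
  have e1 : A*z₁^2 + B*z₁ + C = 0 := by
    have h := hid z₁; rw [hz₁] at h; linarith [h]
  have e2 : A*z₂^2 + B*z₂ + C = 0 := by
    have h := hid z₂; rw [hz₂] at h; linarith [h]
  have e3 : A*z₃^2 + B*z₃ + C = 0 := by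
    have h := hid z₃; rw [hz₃] at h; linarith [h]
  obtain ⟨hA0, hB0, hC0⟩ := quad3 h12 h23 e1 e2 e3
  have hfact : ∀ u, P u = (u-z₁)*(u-z₂)*(u-z₃)*(d-b₁*u) := by
    intro u
    have h := hid u
    rw [hA0, hB0, hC0] at h
    linarith [h]
  have hd : d < 0 := by
    by_contra hcon
    push_neg at hcon
    have h := hfact 0
    rw [hPdef] at h
    have h1 : 0 ≤ z₁*z₂*z₃*d :=
      mul_nonneg (mul_pos (mul_pos hz₁0 hz₂0) hz₃0).le hcon
    have h2 : 0 < γ*c₂*τ^2 := by positivity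
    linarith [h, h1, h2]
  -- sign helper
  have hsign : ∀ u : ℝ, 0 < u → (0 < P u → 0 < hfun a₁ a₂ b₁ b₂ c₁ c₂ γ u τ) ∧
      (P u < 0 → hfun a₁ a₂ b₁ b₂ c₁ c₂ γ u τ < 0) ∧
      (P u = 0 → hfun a₁ a₂ b₁ b₂ c₁ c₂ γ u τ = 0) ∧
      (hfun a₁ a₂ b₁ b₂ c₁ c₂ γ u τ = 0 → P u = 0) := by
    intro u hu
    have he : hfun a₁ a₂ b₁ b₂ c₁ c₂ γ u τ = P u / u^2 := by
      rw [hP_def]; exact hfun_eq a₁ a₂ b₁ b₂ c₁ c₂ γ τ u hu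
    have hu2 : 0 < u^2 := by positivity
    refine ⟨fun h => ?_, fun h => ?_, fun h => ?_, fun h => ?_⟩
    · rw [he]; exact div_pos h hu2
    · rw [he]; exact div_neg_of_neg_of_pos h hu2
    · rw [he, h]; simp
    · rw [he] at h
      rcases div_eq_zero_iff.mp h with h' | h'
      · exact h'
      · exact absurd h' (ne_of_gt hu2)
  refine ⟨z₁, z₂, z₃, hz₁0, h12, h23, ?_, ?_, ?_, ?_, ?_, ?_⟩
  · rintro u (⟨hu0, hu1⟩ | ⟨hu2l, hu3⟩)
    · refine (hsign u hu0).1 ?_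
      rw [hfact u]
      have f4 : 0 < b₁*u - d := by linarith [mul_pos hb₁ hu0]
      linarith [mul_pos (mul_pos (sub_pos.mpr hu1) (by linarith : (0:ℝ) < z₂ - u))
        (mul_pos (by linarith : (0:ℝ) < z₃ - u) f4)]
    · have hu0 : 0 < u := lt_trans hz₂0 hu2l
      refine (hsign u hu0).1 ?_
      rw [hfact u]
      have f4 : 0 < b₁*u - d := by linarith [mul_pos hb₁ hu0]
      linarith [mul_pos (mul_pos (by linarith : (0:ℝ) < u - z₁) (sub_pos.mpr hu2l))
        (mul_pos (sub_pos.mpr hu3) f4)]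
  · rintro u (⟨hu1, hu2⟩ | hu3)
    · have hu0 : 0 < u := lt_trans hz₁0 hu1
      refine (hsign u hu0).2.1 ?_
      rw [hfact u]
      have f4 : 0 < b₁*u - d := by linarith [mul_pos hb₁ hu0]
      linarith [mul_pos (mul_pos (sub_pos.mpr hu1) (sub_pos.mpr hu2))
        (mul_pos (by linarith : (0:ℝ) < z₃ - u) f4)]
    · simp only [mem_Ioi] at hu3
      have hu0 : 0 < u := lt_trans hz₃0 hu3
      refine (hsign u hu0).2.1 ?_
      rw [hfact u]
      have f4 : 0 < b₁*u - d := by linarith [mul_pos hb₁ hu0]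
      linarith [mul_pos (mul_pos (by linarith : (0:ℝ) < u - z₁) (by linarith : (0:ℝ) < u - z₂))
        (mul_pos (sub_pos.mpr hu3) f4)]
  · exact (hsign z₁ hz₁0).2.2.1 hz₁
  · exact (hsign z₂ hz₂0).2.2.1 hz₂
  · exact (hsign z₃ hz₃0).2.2.1 hz₃
  · intro u hu0 hu
    have hPu : P u = 0 := (hsign u hu0).2.2.2 hu
    rw [hfact u] at hPu
    have f4 : d - b₁*u ≠ 0 := by
      have := mul_pos hb₁ hu0
      intro hcon; linarith
    rcases mul_eq_zero.mp hPu with h | h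
    · rcases mul_eq_zero.mp h with h | h
      · rcases mul_eq_zero.mp h with h | h
        · left; linarith [sub_eq_zero.mp h]
        · right; left; linarith [sub_eq_zero.mp h]
      · right; right; linarith [sub_eq_zero.mp h]
    · exact absurd h f4
end

section
/- Let τ̂ > 0 and let z₁, z₂, z₃ : (0, τ̂) → ℝ be functions such that for every τ ∈ (0, τ̂): 0 < z₁(τ) < z₂(τ) < z₃(τ), h(u, τ) > 0 for all u ∈ (0, z₁(τ)) ∪ (z₂(τ), z₃(τ)), and h(u, τ) < 0 for all u ∈ (z₁(τ), z₂(τ)) ∪ (z₃(τ), ∞). Then lim_{τ → 0⁺} z₁(τ)/τ = c₂/a₂, lim_{τ → 0⁺} z₂(τ)/√τ = √(γ·a₂/a₁), and lim_{τ → 0⁺} z₃(τ) = a₁/b₁. -/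
set_option maxHeartbeats 1000000


open Set Filter Topology

lemma hfun_lin_tendsto (a₁ a₂ b₁ b₂ c₁ c₂ γ K : ℝ) (hK : 0 < K) :
    Tendsto (fun τ => hfun a₁ a₂ b₁ b₂ c₁ c₂ γ (K * τ) τ) (𝓝[>] 0)
      (𝓝 (-(γ / K) * (a₂ - c₂ / K))) := by
  have hc : Continuous fun τ : ℝ => K * τ * (a₁ - b₁ * (K * τ)) - c₁ * τ -
      (γ / K) * (a₂ - b₂ * (K * τ) - c₂ / K) := by continuity
  have hF := (hc.tendsto 0).mono_left (nhdsWithin_le_nhds (s := Ioi (0:ℝ)))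
  have hF' : Tendsto (fun τ : ℝ => K * τ * (a₁ - b₁ * (K * τ)) - c₁ * τ -
      (γ / K) * (a₂ - b₂ * (K * τ) - c₂ / K)) (𝓝[>] 0)
      (𝓝 (-(γ / K) * (a₂ - c₂ / K))) := by
    convert hF using 2; ring
  refine Tendsto.congr' ?_ hF'
  filter_upwards [self_mem_nhdsWithin] with τ (hτ : 0 < τ)
  unfold hfun
  field_simp

lemma hfun_sqrt (a₁ a₂ b₁ b₂ c₁ c₂ γ s : ℝ) (hs : 0 < s) :
    ∃ g : ℝ → ℝ, Tendsto g (𝓝[>] 0) (𝓝 (s * a₁ - γ * a₂ / s)) ∧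
      ∀ τ : ℝ, 0 < τ →
        hfun a₁ a₂ b₁ b₂ c₁ c₂ γ (s * Real.sqrt τ) τ = Real.sqrt τ * g τ := by
  set F : ℝ → ℝ := fun t => s * (a₁ - b₁ * (s * t)) - c₁ * t -
      (γ / s) * (a₂ - b₂ * (s * t) - c₂ * t / s) with hFdef
  refine ⟨fun τ => F (Real.sqrt τ), ?_, ?_⟩
  · have hc : Continuous F := by continuity
    have h1 : Tendsto (fun τ : ℝ => F (Real.sqrt τ)) (𝓝 0) (𝓝 (F 0)) := by
      have := (hc.comp Real.continuous_sqrt).tendsto 0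
      rw [Function.comp_apply, Real.sqrt_zero] at this
      exact this
    have h2 := h1.mono_left (nhdsWithin_le_nhds (s := Ioi (0:ℝ)))
    convert h2 using 2
    simp [hFdef]
    ring
  · intro τ hτ
    obtain ⟨t, ht, rfl⟩ : ∃ t, 0 < t ∧ t * t = τ :=
      ⟨Real.sqrt τ, Real.sqrt_pos.mpr hτ, Real.mul_self_sqrt hτ.le⟩
    simp only [Real.sqrt_mul_self ht.le]
    unfold hfun
    simp only [hFdef]
    field_simp

lemma hfun_fixed (a₁ a₂ b₁ b₂ c₁ c₂ γ u : ℝ) :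
    Tendsto (fun τ => hfun a₁ a₂ b₁ b₂ c₁ c₂ γ u τ) (𝓝[>] 0)
      (𝓝 (u * (a₁ - b₁ * u))) := by
  have hc : Continuous fun τ : ℝ => hfun a₁ a₂ b₁ b₂ c₁ c₂ γ u τ := by
    unfold hfun; fun_prop
  have := (hc.tendsto 0).mono_left (nhdsWithin_le_nhds (s := Ioi (0:ℝ)))
  convert this using 2
  simp [hfun]

lemma sqrt_tendsto_zero : Tendsto Real.sqrt (𝓝[>] (0:ℝ)) (𝓝 0) := by
  have := Real.continuous_sqrt.tendsto 0
  simp only [Real.sqrt_zero] at this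
  exact this.mono_left nhdsWithin_le_nhds

lemma ev_sqrt_const (C c : ℝ) (hc : 0 < c) :
    ∀ᶠ τ in 𝓝[>] (0:ℝ), C * Real.sqrt τ < c := by
  have h : Tendsto (fun τ => C * Real.sqrt τ) (𝓝[>] (0:ℝ)) (𝓝 (C * 0)) :=
    (tendsto_const_nhds.mul sqrt_tendsto_zero)
  rw [mul_zero] at h
  exact h.eventually_lt_const hc

lemma ev_lin_sqrt (C c : ℝ) (hc : 0 < c) :
    ∀ᶠ τ in 𝓝[>] (0:ℝ), C * τ < c * Real.sqrt τ := by
  filter_upwards [ev_sqrt_const C c hc, self_mem_nhdsWithin] with τ h1 (hτ : 0 < τ)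
  have ht : 0 < Real.sqrt τ := Real.sqrt_pos.mpr hτ
  have htt : Real.sqrt τ * Real.sqrt τ = τ := Real.mul_self_sqrt hτ.le
  nlinarith

/-- Asymptotic part of Lemma 6.1: for the three zeros `z₁(τ) < z₂(τ) < z₃(τ)` of
`h(·, τ)`, one has `z₁(τ)/τ → c₂/a₂`, `z₂(τ)/√τ → √(γa₂/a₁)` and `z₃(τ) → a₁/b₁`
as `τ → 0⁺`. -/
theorem stmt_9 (a₁ a₂ b₁ b₂ c₁ c₂ γ δ : ℝ)
    (ha₁ : 0 < a₁) (ha₂ : 0 < a₂) (hb₁ : 0 < b₁) (hb₂ : 0 < b₂)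
    (hc₁ : 0 < c₁) (hc₂ : 0 < c₂) (hγ : 0 < γ) (hδ : 0 < δ)
    (τhat : ℝ) (hτhat : 0 < τhat)
    (z₁ z₂ z₃ : ℝ → ℝ)
    (hz : ∀ τ ∈ Ioo (0:ℝ) τhat,
      0 < z₁ τ ∧ z₁ τ < z₂ τ ∧ z₂ τ < z₃ τ ∧
      (∀ u : ℝ, u ∈ Ioo 0 (z₁ τ) ∪ Ioo (z₂ τ) (z₃ τ) →
        0 < hfun a₁ a₂ b₁ b₂ c₁ c₂ γ u τ) ∧
      (∀ u : ℝ, u ∈ Ioo (z₁ τ) (z₂ τ) ∪ Ioi (z₃ τ) →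
        hfun a₁ a₂ b₁ b₂ c₁ c₂ γ u τ < 0)) :
    Tendsto (fun τ => z₁ τ / τ) (𝓝[>] 0) (𝓝 (c₂ / a₂)) ∧
    Tendsto (fun τ => z₂ τ / Real.sqrt τ) (𝓝[>] 0)
      (𝓝 (Real.sqrt (γ * a₂ / a₁))) ∧
    Tendsto z₃ (𝓝[>] 0) (𝓝 (a₁ / b₁)) := by
  set S : ℝ := Real.sqrt (γ * a₂ / a₁) with hSdef
  have hS : 0 < S := Real.sqrt_pos.mpr (by positivity)
  have hS2 : S * S * a₁ = γ * a₂ := by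
    have := Real.mul_self_sqrt (le_of_lt (show (0:ℝ) < γ * a₂ / a₁ by positivity))
    rw [← hSdef] at this
    rw [this]; field_simp
  have evIoo : ∀ᶠ τ in 𝓝[>] (0:ℝ), τ ∈ Ioo (0:ℝ) τhat := by
    filter_upwards [self_mem_nhdsWithin,
      ((tendsto_id (α := ℝ)).mono_left nhdsWithin_le_nhds).eventually_lt_const hτhat]
      with τ h1 h2
    exact ⟨h1, h2⟩
  -- Master squeeze lemma
  have master : ∀ Km Kp sm sp um up : ℝ,
      0 < Km → Km < c₂ / a₂ → c₂ / a₂ < Kp →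
      0 < sm → 0 < sp → sm * a₁ - γ * a₂ / sm < 0 → 0 < sp * a₁ - γ * a₂ / sp →
      0 < um → um < a₁ / b₁ → a₁ / b₁ < up →
      ∀ᶠ τ in 𝓝[>] (0:ℝ),
        Km * τ ≤ z₁ τ ∧ z₁ τ ≤ Kp * τ ∧
        sm * Real.sqrt τ ≤ z₂ τ ∧ z₂ τ ≤ sp * Real.sqrt τ ∧
        um ≤ z₃ τ ∧ z₃ τ ≤ up := by
    intro Km Kp sm sp um up hKm hKm2 hKp hsm hsp hsm2 hsp2 hum hum2 hup
    have hKp0 : 0 < Kp := lt_trans (div_pos hc₂ ha₂) hKp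
    have hup0 : 0 < up := lt_trans (div_pos ha₁ hb₁) hup
    -- sign facts
    have s1 : ∀ᶠ τ in 𝓝[>] (0:ℝ), 0 < hfun a₁ a₂ b₁ b₂ c₁ c₂ γ (Km * τ) τ := by
      have hT := hfun_lin_tendsto a₁ a₂ b₁ b₂ c₁ c₂ γ Km hKm
      have hpos : 0 < -(γ / Km) * (a₂ - c₂ / Km) := by
        have h1 : a₂ < c₂ / Km := by
          rw [lt_div_iff₀ hKm]
          rw [lt_div_iff₀ ha₂] at hKm2
          linarith
        have h2 : 0 < γ / Km := div_pos hγ hKm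
        nlinarith
      exact hT.eventually_const_lt hpos
    have s2 : ∀ᶠ τ in 𝓝[>] (0:ℝ), hfun a₁ a₂ b₁ b₂ c₁ c₂ γ (Kp * τ) τ < 0 := by
      have hT := hfun_lin_tendsto a₁ a₂ b₁ b₂ c₁ c₂ γ Kp hKp0
      have hneg : -(γ / Kp) * (a₂ - c₂ / Kp) < 0 := by
        have h1 : c₂ / Kp < a₂ := by
          rw [div_lt_iff₀ hKp0]
          rw [div_lt_iff₀ ha₂] at hKp
          linarith
        have h2 : 0 < γ / Kp := div_pos hγ hKp0
        nlinarith
      exact hT.eventually_lt_const hneg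
    obtain ⟨gm, hgm, hidm⟩ := hfun_sqrt a₁ a₂ b₁ b₂ c₁ c₂ γ sm hsm
    obtain ⟨gp, hgp, hidp⟩ := hfun_sqrt a₁ a₂ b₁ b₂ c₁ c₂ γ sp hsp
    have s3 : ∀ᶠ τ in 𝓝[>] (0:ℝ),
        hfun a₁ a₂ b₁ b₂ c₁ c₂ γ (sm * Real.sqrt τ) τ < 0 := by
      filter_upwards [hgm.eventually_lt_const hsm2, self_mem_nhdsWithin]
        with τ h1 (hτ : 0 < τ)
      rw [hidm τ hτ]
      exact mul_neg_of_pos_of_neg (Real.sqrt_pos.mpr hτ) h1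
    have s4 : ∀ᶠ τ in 𝓝[>] (0:ℝ),
        0 < hfun a₁ a₂ b₁ b₂ c₁ c₂ γ (sp * Real.sqrt τ) τ := by
      filter_upwards [hgp.eventually_const_lt hsp2, self_mem_nhdsWithin]
        with τ h1 (hτ : 0 < τ)
      rw [hidp τ hτ]
      exact mul_pos (Real.sqrt_pos.mpr hτ) h1
    have s5 : ∀ᶠ τ in 𝓝[>] (0:ℝ), 0 < hfun a₁ a₂ b₁ b₂ c₁ c₂ γ um τ := by
      have hT := hfun_fixed a₁ a₂ b₁ b₂ c₁ c₂ γ um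
      have : 0 < um * (a₁ - b₁ * um) := by
        have : b₁ * um < a₁ := by
          rw [lt_div_iff₀ hb₁] at hum2; linarith
        nlinarith
      exact hT.eventually_const_lt this
    have s6 : ∀ᶠ τ in 𝓝[>] (0:ℝ), hfun a₁ a₂ b₁ b₂ c₁ c₂ γ up τ < 0 := by
      have hT := hfun_fixed a₁ a₂ b₁ b₂ c₁ c₂ γ up
      have : up * (a₁ - b₁ * up) < 0 := by
        have : a₁ < b₁ * up := by
          rw [div_lt_iff₀ hb₁] at hup; linarith
        nlinarith
      exact hT.eventually_lt_const this
    have o1 : ∀ᶠ τ in 𝓝[>] (0:ℝ), Kp * τ < sm * Real.sqrt τ := ev_lin_sqrt Kp sm hsm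
    have o2 : ∀ᶠ τ in 𝓝[>] (0:ℝ), Km * τ < sm * Real.sqrt τ := ev_lin_sqrt Km sm hsm
    have o3 : ∀ᶠ τ in 𝓝[>] (0:ℝ), sp * Real.sqrt τ < um := ev_sqrt_const sp um hum
    have o4 : ∀ᶠ τ in 𝓝[>] (0:ℝ), sm * Real.sqrt τ < um := ev_sqrt_const sm um hum
    have o5 : ∀ᶠ τ in 𝓝[>] (0:ℝ), Kp * τ < sp * Real.sqrt τ := ev_lin_sqrt Kp sp hsp
    filter_upwards [evIoo, s1, s2, s3, s4, s5, s6, o1, o2, o3, o4, o5,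
      self_mem_nhdsWithin] with τ hIoo h1 h2 h3 h4 h5 h6 ho1 ho2 ho3 ho4 ho5 (hτ : 0 < τ)
    obtain ⟨hz1, h12, h23, hpos, hneg⟩ := hz τ hIoo
    have ht : 0 < Real.sqrt τ := Real.sqrt_pos.mpr hτ
    have negFact : ∀ u, 0 < u → hfun a₁ a₂ b₁ b₂ c₁ c₂ γ u τ < 0 →
        z₁ τ ≤ u ∧ (u ≤ z₂ τ ∨ z₃ τ ≤ u) := by
      intro u hu hn
      constructor
      · by_contra hc; push_neg at hc
        exact absurd (hpos u (Or.inl ⟨hu, hc⟩)) (by linarith)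
      · by_contra hc; push_neg at hc
        exact absurd (hpos u (Or.inr ⟨hc.1, hc.2⟩)) (by linarith)
    have posFact : ∀ u, 0 < hfun a₁ a₂ b₁ b₂ c₁ c₂ γ u τ →
        u ≤ z₃ τ ∧ (u ≤ z₁ τ ∨ z₂ τ ≤ u) := by
      intro u hp
      constructor
      · by_contra hc; push_neg at hc
        exact absurd (hneg u (Or.inr hc)) (by linarith)
      · by_contra hc; push_neg at hc
        exact absurd (hneg u (Or.inl ⟨hc.1, hc.2⟩)) (by linarith)
    obtain ⟨h3ge, _⟩ := posFact um h5
    obtain ⟨hsm1, hsm_or⟩ := negFact (sm * Real.sqrt τ) (by positivity) h3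
    have h2ge : sm * Real.sqrt τ ≤ z₂ τ := by
      rcases hsm_or with h | h
      · exact h
      · linarith
    obtain ⟨h1le, _⟩ := negFact (Kp * τ) (by positivity) h2
    obtain ⟨_, hsp_or⟩ := posFact (sp * Real.sqrt τ) h4
    have h2le : z₂ τ ≤ sp * Real.sqrt τ := by
      rcases hsp_or with h | h
      · linarith
      · exact h
    obtain ⟨_, hKm_or⟩ := posFact (Km * τ) h1
    have h1ge : Km * τ ≤ z₁ τ := by
      rcases hKm_or with h | h
      · exact h
      · linarith
    obtain ⟨_, hup_or⟩ := negFact up hup0 h6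
    have h3le : z₃ τ ≤ up := by
      rcases hup_or with h | h
      · linarith
      · exact h
    exact ⟨h1ge, h1le, h2ge, h2le, h3ge, h3le⟩
  have hA : 0 < a₁ / b₁ := div_pos ha₁ hb₁
  have hL : 0 < c₂ / a₂ := div_pos hc₂ ha₂
  -- concrete dummy parameters with sign conditions
  have dummy_sm : (S / 2) * a₁ - γ * a₂ / (S / 2) < 0 := by
    rw [sub_neg, lt_div_iff₀ (by positivity : (0:ℝ) < S / 2)]
    nlinarith
  have dummy_sp : 0 < (2 * S) * a₁ - γ * a₂ / (2 * S) := by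
    rw [sub_pos, div_lt_iff₀ (by positivity : (0:ℝ) < 2 * S)]
    nlinarith
  refine ⟨?_, ?_, ?_⟩
  · rw [Metric.tendsto_nhds]
    intro ε hε
    set e := min ε (c₂ / a₂) with hedef
    have he : 0 < e := lt_min hε hL
    have heε : e ≤ ε := min_le_left _ _
    have heL : e ≤ c₂ / a₂ := min_le_right _ _
    have hM := master (c₂ / a₂ - e / 2) (c₂ / a₂ + e / 2) (S / 2) (2 * S)
      (a₁ / b₁ / 2) (a₁ / b₁ + 1)
      (by linarith) (by linarith) (by linarith)
      (by positivity) (by positivity) dummy_sm dummy_sp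
      (by positivity) (by linarith) (by linarith)
    filter_upwards [hM, self_mem_nhdsWithin] with τ hτM (hτ : 0 < τ)
    obtain ⟨hl, hr, -, -, -, -⟩ := hτM
    rw [Real.dist_eq, abs_lt]
    constructor
    · have : c₂ / a₂ - e / 2 ≤ z₁ τ / τ := by
        rw [le_div_iff₀ hτ]; linarith
      linarith
    · have : z₁ τ / τ ≤ c₂ / a₂ + e / 2 := by
        rw [div_le_iff₀ hτ]; linarith
      linarith
  · rw [Metric.tendsto_nhds]
    intro ε hε
    set e := min ε S with hedef
    have he : 0 < e := lt_min hε hS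
    have heε : e ≤ ε := min_le_left _ _
    have heS : e ≤ S := min_le_right _ _
    have hsm0 : 0 < S - e / 2 := by linarith
    have hsp0 : 0 < S + e / 2 := by linarith
    have hsm2 : (S - e / 2) * a₁ - γ * a₂ / (S - e / 2) < 0 := by
      rw [sub_neg, lt_div_iff₀ hsm0]
      nlinarith [hS2, mul_pos (mul_pos he ha₁) (show (0:ℝ) < S - e / 4 by linarith),
        he, heS, hS, ha₁]
    have hsp2 : 0 < (S + e / 2) * a₁ - γ * a₂ / (S + e / 2) := by
      rw [sub_pos, div_lt_iff₀ hsp0]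
      nlinarith [hS2, mul_pos (mul_pos he ha₁) (show (0:ℝ) < S + e / 4 by linarith),
        he, heS, hS, ha₁]
    have hM := master (c₂ / a₂ / 2) (c₂ / a₂ + 1) (S - e / 2) (S + e / 2)
      (a₁ / b₁ / 2) (a₁ / b₁ + 1)
      (by positivity) (by linarith) (by linarith)
      hsm0 hsp0 hsm2 hsp2
      (by positivity) (by linarith) (by linarith)
    filter_upwards [hM, self_mem_nhdsWithin] with τ hτM (hτ : 0 < τ)
    obtain ⟨-, -, hl, hr, -, -⟩ := hτM
    have ht : 0 < Real.sqrt τ := Real.sqrt_pos.mpr hτ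
    rw [Real.dist_eq, abs_lt]
    constructor
    · have : S - e / 2 ≤ z₂ τ / Real.sqrt τ := by
        rw [le_div_iff₀ ht]; linarith
      linarith
    · have : z₂ τ / Real.sqrt τ ≤ S + e / 2 := by
        rw [div_le_iff₀ ht]; linarith
      linarith
  · rw [Metric.tendsto_nhds]
    intro ε hε
    set e := min ε (a₁ / b₁) with hedef
    have he : 0 < e := lt_min hε hA
    have heε : e ≤ ε := min_le_left _ _
    have heA : e ≤ a₁ / b₁ := min_le_right _ _
    have hM := master (c₂ / a₂ / 2) (c₂ / a₂ + 1) (S / 2) (2 * S)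
      (a₁ / b₁ - e / 2) (a₁ / b₁ + e / 2)
      (by positivity) (by linarith) (by linarith)
      (by positivity) (by positivity) dummy_sm dummy_sp
      (by linarith) (by linarith) (by linarith)
    filter_upwards [hM] with τ hτM
    obtain ⟨-, -, -, -, hl, hr⟩ := hτM
    rw [Real.dist_eq, abs_lt]
    exact ⟨by linarith, by linarith⟩
end
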